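/- arXiv:2211.03458 — 4 statements merged into one kernel-verified Lean document; each statement's English description precedes it below -/
import Mathlib

section
/- Let X be a quasi-Banach function space over a σ-finite measure space Ω. If g ∈ L^0(Ω) satisfies fg ∈ L^1(Ω) for every f ∈ X, then sup over f ∈ X with ‖f‖_X = 1 of ‖fg‖_{L^1(Ω)} is finite. -/
open MeasureTheory ENNReal

/-- A quasi-Banach function space over a measure space `(Ω, μ)`:
a vector subspace of `L⁰(Ω)` with a quasi-norm satisfying the ideal property,
the Fatou property, and saturation. -/
structure QBFS (Ω : Type*) [MeasurableSpace Ω] (μ : Measure Ω) where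
  mem : (Ω → ℝ) → Prop
  norm : (Ω → ℝ) → ℝ
  K : ℝ
  one_le_K : 1 ≤ K
  norm_nonneg : ∀ f, mem f → 0 ≤ norm f
  aestronglyMeasurable : ∀ f, mem f → AEStronglyMeasurable f μ
  add_mem : ∀ f g, mem f → mem g → mem (f + g)
  quasi_triangle : ∀ f g, mem f → mem g → norm (f + g) ≤ K * (norm f + norm g)
  smul_mem : ∀ (c : ℝ) f, mem f → mem (c • f)
  norm_smul : ∀ (c : ℝ) f, mem f → norm (c • f) = |c| * norm f
  norm_eq_zero_iff : ∀ f, mem f → (norm f = 0 ↔ f =ᵐ[μ] 0)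
  ideal : ∀ f g, mem f → AEStronglyMeasurable g μ →
    (∀ᵐ x ∂μ, |g x| ≤ |f x|) → mem g ∧ norm g ≤ norm f
  fatou : ∀ (f : ℕ → Ω → ℝ) (g : Ω → ℝ), (∀ n, mem (f n)) →
    (∀ᵐ x ∂μ, ∀ n, 0 ≤ f n x ∧ f n x ≤ f (n + 1) x) →
    (∀ᵐ x ∂μ, Filter.Tendsto (fun n => f n x) Filter.atTop (nhds (g x))) →
    AEStronglyMeasurable g μ →
    BddAbove (Set.range fun n => norm (f n)) →
    mem g ∧ norm g = ⨆ n, norm (f n)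
  saturation : ∀ E : Set Ω, MeasurableSet E → 0 < μ E →
    ∃ F, F ⊆ E ∧ MeasurableSet F ∧ 0 < μ F ∧ mem (F.indicator fun _ => (1 : ℝ))

/-- Membership in the Köthe dual: `g ∈ X'` iff `fg ∈ L¹(μ)` for all `f ∈ X`. -/
def kMem {Ω : Type*} [MeasurableSpace Ω] (μ : Measure Ω)
    (mem : (Ω → ℝ) → Prop) (g : Ω → ℝ) : Prop :=
  AEStronglyMeasurable g μ ∧ ∀ f, mem f → Integrable (fun x => f x * g x) μ

/-- The Köthe dual seminorm `‖g‖_{X'} = sup_{‖f‖_X = 1} ‖fg‖_{L¹}`. -/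
noncomputable def kNorm {Ω : Type*} [MeasurableSpace Ω] (μ : Measure Ω)
    (mem : (Ω → ℝ) → Prop) (nrm : (Ω → ℝ) → ℝ) (g : Ω → ℝ) : ℝ :=
  sSup {c : ℝ | ∃ f, mem f ∧ nrm f = 1 ∧ c = ∫ x, |f x * g x| ∂μ}

theorem QBFS.sum_bound {Ω : Type*} [MeasurableSpace Ω] {μ : Measure Ω} (X : QBFS Ω μ) :
    ∀ (N : ℕ) (a : ℕ → Ω → ℝ), (∀ n, X.mem (a n)) →
      X.mem (∑ n ∈ Finset.range (N+1), a n) ∧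
      X.norm (∑ n ∈ Finset.range (N+1), a n) ≤
        ∑ n ∈ Finset.range (N+1), X.K^(n+1) * X.norm (a n) := by
  intro N
  induction N with
  | zero =>
    intro a ha
    simp only [zero_add, Finset.sum_range_one]
    refine ⟨ha 0, ?_⟩
    nlinarith [X.norm_nonneg (a 0) (ha 0), X.one_le_K]
  | succ N ih =>
    intro a ha
    have key : ∑ n ∈ Finset.range (N+2), a n
        = (∑ n ∈ Finset.range (N+1), a (n+1)) + a 0 := Finset.sum_range_succ' a (N+1)
    have ih' := ih (fun n => a (n+1)) (fun n => ha (n+1))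
    have hmem : X.mem (∑ n ∈ Finset.range (N+2), a n) := by
      rw [key]; exact X.add_mem _ _ ih'.1 (ha 0)
    refine ⟨hmem, ?_⟩
    rw [key]
    calc X.norm ((∑ n ∈ Finset.range (N+1), a (n+1)) + a 0)
        ≤ X.K * (X.norm (∑ n ∈ Finset.range (N+1), a (n+1)) + X.norm (a 0)) :=
          X.quasi_triangle _ _ ih'.1 (ha 0)
      _ ≤ X.K * ((∑ n ∈ Finset.range (N+1), X.K^(n+1) * X.norm (a (n+1))) + X.norm (a 0)) := by
          have hK : 0 < X.K := lt_of_lt_of_le one_pos X.one_le_K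
          apply mul_le_mul_of_nonneg_left _ hK.le
          exact add_le_add ih'.2 le_rfl
      _ = ∑ n ∈ Finset.range (N+2), X.K^(n+1) * X.norm (a n) := by
          rw [Finset.sum_range_succ' (fun n => X.K^(n+1) * X.norm (a n)) (N+1)]
          rw [mul_add, Finset.mul_sum]
          congr 1
          · exact Finset.sum_congr rfl (fun x _ => by ring)
          · ring

/-- If `g ∈ L⁰(Ω)` satisfies `fg ∈ L¹(Ω)` for every `f ∈ X`, then
`sup_{‖f‖_X = 1} ‖fg‖_{L¹}` is finite, i.e. the defining set of the Köthe dual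
seminorm is bounded above. -/
theorem statement1 {Ω : Type*} [MeasurableSpace Ω] {μ : Measure Ω} [SigmaFinite μ]
    (X : QBFS Ω μ) (g : Ω → ℝ) (hg : AEStronglyMeasurable g μ)
    (h : ∀ f, X.mem f → Integrable (fun x => f x * g x) μ) :
    BddAbove {c : ℝ | ∃ f, X.mem f ∧ X.norm f = 1 ∧ c = ∫ x, |f x * g x| ∂μ} := by
  by_contra hbdd
  rw [not_bddAbove_iff] at hbdd
  set K := X.K with hKdef
  have hK1 : 1 ≤ K := X.one_le_K
  have hKpos : (0:ℝ) < K := lt_of_lt_of_le one_pos hK1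
  have h2K : (0:ℝ) < 2*K := by linarith
  set r : ℝ := (2*K)⁻¹ with hrdef
  have hrpos : 0 < r := inv_pos.mpr h2K
  have hr2K : r * (2*K) = 1 := inv_mul_cancel₀ (ne_of_gt h2K)
  -- choose the functions f n
  have hchoice : ∀ n : ℕ, ∃ f, X.mem f ∧ X.norm f = 1 ∧
      ((2*K)^n * (n+1) : ℝ) < ∫ x, |f x * g x| ∂μ := by
    intro n
    obtain ⟨c, hc, hlt⟩ := hbdd ((2*K)^n * (n+1))
    obtain ⟨f, hf1, hf2, hf3⟩ := hc
    exact ⟨f, hf1, hf2, hf3 ▸ hlt⟩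
  choose f hfmem hfnorm hfint using hchoice
  -- absolute values
  have hfaesm : ∀ n, AEStronglyMeasurable (f n) μ := fun n => X.aestronglyMeasurable _ (hfmem n)
  have habs_aesm : ∀ n, AEStronglyMeasurable (fun x => |f n x|) μ := fun n =>
    aestronglyMeasurable_iff_aemeasurable.mpr (measurable_abs.comp_aemeasurable (hfaesm n).aemeasurable)
  have habs : ∀ n, X.mem (fun x => |f n x|) ∧ X.norm (fun x => |f n x|) ≤ 1 := by
    intro n
    have := X.ideal (f n) (fun x => |f n x|) (hfmem n) (habs_aesm n)
      (Filter.Eventually.of_forall (fun x => by simp [abs_abs]))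
    exact ⟨this.1, (hfnorm n) ▸ this.2⟩
  -- the summands
  set a : ℕ → Ω → ℝ := fun n => (r^n) • (fun x => |f n x|) with hadef
  have ha_apply : ∀ n x, a n x = r^n * |f n x| := fun n x => rfl
  have ha_nonneg : ∀ n x, 0 ≤ a n x := fun n x => by
    rw [ha_apply]; positivity
  have hamem : ∀ n, X.mem (a n) := fun n => X.smul_mem _ _ (habs n).1
  have hanorm : ∀ n, X.norm (a n) ≤ r^n := by
    intro n
    rw [hadef, X.norm_smul _ _ (habs n).1, abs_of_nonneg (le_of_lt (pow_pos hrpos n))]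
    nlinarith [(habs n).2, pow_pos hrpos n]
  -- the partial sums
  set hsum : ℕ → Ω → ℝ := fun N => ∑ n ∈ Finset.range (N+1), a n with hsdef
  have hsum_apply : ∀ N x, hsum N x = ∑ n ∈ Finset.range (N+1), a n x := fun N x => by
    rw [hsdef]; exact Finset.sum_apply x _ _
  have hsum_nonneg : ∀ N x, 0 ≤ hsum N x := fun N x => by
    rw [hsum_apply]; exact Finset.sum_nonneg (fun n _ => ha_nonneg n x)
  have hsum_mono : ∀ N x, hsum N x ≤ hsum (N+1) x := by
    intro N x
    rw [hsum_apply, hsum_apply, Finset.sum_range_succ _ (N+1)]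
    exact le_add_of_nonneg_right (ha_nonneg (N+1) x)
  have hsum_mem : ∀ N, X.mem (hsum N) := fun N => (X.sum_bound N a hamem).1
  have hsum_norm : ∀ N, X.norm (hsum N) ≤ 2*K := by
    intro N
    refine le_trans (X.sum_bound N a hamem).2 ?_
    calc ∑ n ∈ Finset.range (N+1), X.K^(n+1) * X.norm (a n)
        ≤ ∑ n ∈ Finset.range (N+1), K * (1/2)^n := by
          apply Finset.sum_le_sum
          intro n _
          have h1 : X.K^(n+1) * X.norm (a n) ≤ X.K^(n+1) * r^n :=
            mul_le_mul_of_nonneg_left (hanorm n) (le_of_lt (pow_pos hKpos (n+1)))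
          refine le_trans h1 (le_of_eq ?_)
          have hKr : K * r = 1/2 := by
            rw [hrdef]
            rw [mul_inv_eq_iff_eq_mul₀ (ne_of_gt h2K)]
            ring
          calc X.K^(n+1) * r^n = K * ((K*r)^n) := by
                rw [← hKdef, mul_pow, pow_succ]
                ring
            _ = K * (1/2)^n := by rw [hKr]
      _ = K * ∑ n ∈ Finset.range (N+1), (1/2:ℝ)^n := by rw [Finset.mul_sum]
      _ ≤ K * 2 := mul_le_mul_of_nonneg_left (sum_geometric_two_le _) hKpos.le
      _ = 2*K := by ring
  have hsum_aesm : ∀ N, AEStronglyMeasurable (hsum N) μ := fun N =>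
    X.aestronglyMeasurable _ (hsum_mem N)
  -- the ENNReal-valued supremum
  set H : Ω → ℝ≥0∞ := fun x => ⨆ N, ENNReal.ofReal (hsum N x) with hHdef
  have hH_aemeas : AEMeasurable H μ :=
    AEMeasurable.iSup (fun N => ENNReal.measurable_ofReal.comp_aemeasurable
      (hsum_aesm N).aemeasurable)
  have hsum_mono' : ∀ x, Monotone (fun N => hsum N x) :=
    fun x => monotone_nat_of_le_succ (fun N => hsum_mono N x)
  have hH_fin : ∀ᵐ x ∂μ, H x ≠ ∞ := by
    set H' := hH_aemeas.mk H with hH'def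
    have hH'meas : Measurable H' := hH_aemeas.measurable_mk
    have hHH' : H =ᵐ[μ] H' := hH_aemeas.ae_eq_mk
    by_contra hcon
    have hS'meas : MeasurableSet {x | H' x = ∞} := hH'meas (measurableSet_singleton ∞)
    have hpos : 0 < μ {x | H' x = ∞} := by
      rcases eq_zero_or_pos (μ {x | H' x = ∞}) with hz | hp
      · exfalso
        apply hcon
        have hae' : ∀ᵐ x ∂μ, H' x ≠ ∞ := by
          rw [MeasureTheory.ae_iff]
          simpa using hz
        filter_upwards [hHH', hae'] with x hx hx'
        rw [hx]; exact hx'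
      · exact hp
    obtain ⟨F, hFsub, hFmeas, hFpos, hFmem⟩ := X.saturation _ hS'meas hpos
    set χF : Ω → ℝ := F.indicator (fun _ => (1:ℝ)) with hχdef
    have hχnorm_pos : 0 < X.norm χF := by
      rcases (X.norm_nonneg χF hFmem).lt_or_eq with hlt | heq
      · exact hlt
      · exfalso
        have hae0 : χF =ᵐ[μ] 0 := (X.norm_eq_zero_iff χF hFmem).mp heq.symm
        have hFsub0 : F ⊆ {x | ¬ (χF x = (0:Ω → ℝ) x)} := by
          intro x hx
          simp only [Set.mem_setOf_eq, Pi.zero_apply, hχdef, Set.indicator_of_mem hx]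
          exact one_ne_zero
        have := measure_mono_null hFsub0 ((MeasureTheory.ae_iff).mp hae0)
        exact absurd this (ne_of_gt hFpos)
    have hkey : ∀ t : ℝ, 0 ≤ t → t * X.norm χF ≤ 2*K := by
      intro t ht
      set w : Ω → ℝ := t • χF with hwdef
      have hwmem : X.mem w := X.smul_mem t χF hFmem
      have hwaesm : AEStronglyMeasurable w μ := X.aestronglyMeasurable w hwmem
      have hw_apply : ∀ x, w x = t * χF x := fun x => rfl
      have hw_nonneg : ∀ x, 0 ≤ w x := by
        intro x
        rw [hw_apply, hχdef]
        rcases Set.indicator_eq_zero_or_self F (fun _ => (1:ℝ)) x with h0 | h1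
        · rw [h0]; simp
        · rw [h1]; linarith
      set v : ℕ → Ω → ℝ := fun N x => min (hsum N x) (w x) with hvdef
      have hv_aesm : ∀ N, AEStronglyMeasurable (v N) μ := fun N =>
        aestronglyMeasurable_iff_aemeasurable.mpr
          ((hsum_aesm N).aemeasurable.min hwaesm.aemeasurable)
      have hv_nonneg : ∀ N x, 0 ≤ v N x := fun N x =>
        le_min (hsum_nonneg N x) (hw_nonneg x)
      have hv_ideal : ∀ N, X.mem (v N) ∧ X.norm (v N) ≤ X.norm (hsum N) := by
        intro N
        apply X.ideal (hsum N) (v N) (hsum_mem N) (hv_aesm N)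
        apply Filter.Eventually.of_forall
        intro x
        rw [abs_of_nonneg (hv_nonneg N x), abs_of_nonneg (hsum_nonneg N x)]
        exact min_le_left _ _
      have hv_tendsto : ∀ᵐ x ∂μ, Filter.Tendsto (fun N => v N x) Filter.atTop (nhds (w x)) := by
        filter_upwards [hHH'] with x hx
        by_cases hxF : x ∈ F
        · have hxtop : H x = ∞ := by rw [hx]; exact hFsub hxF
          have hwx : w x = t := by
            rw [hw_apply, hχdef, Set.indicator_of_mem hxF, mul_one]
          have hN0 : ∃ N₀, t ≤ hsum N₀ x := by
            by_contra hc
            push_neg at hc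
            have hle : H x ≤ ENNReal.ofReal t :=
              iSup_le (fun N => ENNReal.ofReal_le_ofReal (hc N).le)
            rw [hxtop, top_le_iff] at hle
            exact ENNReal.ofReal_ne_top hle
          obtain ⟨N₀, hN₀⟩ := hN0
          apply tendsto_atTop_of_eventually_const (i₀ := N₀)
          intro N hN
          rw [hvdef]
          simp only
          rw [hwx]
          exact min_eq_right (le_trans hN₀ (hsum_mono' x hN))
        · have hwx : w x = 0 := by
            rw [hw_apply, hχdef, Set.indicator_of_notMem hxF, mul_zero]
          have : ∀ N, v N x = w x := by
            intro N
            rw [hvdef]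
            simp only
            rw [hwx]
            exact min_eq_right (hsum_nonneg N x)
          rw [show (fun N => v N x) = fun _ => w x from funext this]
          exact tendsto_const_nhds
      have hfatou := X.fatou v w (fun N => (hv_ideal N).1)
        (Filter.Eventually.of_forall (fun x N =>
          ⟨hv_nonneg N x, min_le_min (hsum_mono N x) le_rfl⟩))
        hv_tendsto hwaesm
        ⟨2*K, by rintro _ ⟨N, rfl⟩; exact le_trans (hv_ideal N).2 (hsum_norm N)⟩
      have hwnorm : X.norm w ≤ 2*K := by
        rw [hfatou.2]
        exact ciSup_le (fun N => le_trans (hv_ideal N).2 (hsum_norm N))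
      rw [hwdef, X.norm_smul t χF hFmem, abs_of_nonneg ht] at hwnorm
      exact hwnorm
    have := hkey ((2*K+1)/X.norm χF) (by positivity)
    rw [div_mul_cancel₀ _ (ne_of_gt hχnorm_pos)] at this
    linarith
  -- the limit function
  set hstar : Ω → ℝ := fun x => (H x).toReal with hstardef
  have hstar_aesm : AEStronglyMeasurable hstar μ :=
    aestronglyMeasurable_iff_aemeasurable.mpr (ENNReal.measurable_toReal.comp_aemeasurable hH_aemeas)
  have htendsto : ∀ᵐ x ∂μ, Filter.Tendsto (fun N => hsum N x) Filter.atTop (nhds (hstar x)) := by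
    filter_upwards [hH_fin] with x hx
    have hmono : Monotone (fun N => ENNReal.ofReal (hsum N x)) :=
      monotone_nat_of_le_succ (fun N => ENNReal.ofReal_le_ofReal (hsum_mono N x))
    have h1 : Filter.Tendsto (fun N => ENNReal.ofReal (hsum N x)) Filter.atTop (nhds (H x)) :=
      tendsto_atTop_iSup hmono
    have h2 := (ENNReal.tendsto_toReal hx).comp h1
    refine h2.congr (fun N => ?_)
    simp only [Function.comp_apply, ENNReal.toReal_ofReal (hsum_nonneg N x)]
  have hstar_mem : X.mem hstar := by
    refine (X.fatou hsum hstar hsum_mem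
      (Filter.Eventually.of_forall (fun x N => ⟨hsum_nonneg N x, hsum_mono N x⟩))
      htendsto hstar_aesm ⟨2*K, ?_⟩).1
    rintro _ ⟨N, rfl⟩
    exact hsum_norm N
  -- hsum N ≤ hstar a.e.
  have hsum_le : ∀ᵐ x ∂μ, ∀ N, hsum N x ≤ hstar x := by
    filter_upwards [hH_fin] with x hx N
    have h1 : ENNReal.ofReal (hsum N x) ≤ H x := le_iSup (fun N => ENNReal.ofReal (hsum N x)) N
    have := ENNReal.toReal_mono hx h1
    rwa [ENNReal.toReal_ofReal (hsum_nonneg N x)] at this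
  -- nonnegativity of hstar
  have hstar_nonneg : ∀ x, 0 ≤ hstar x := fun x => ENNReal.toReal_nonneg
  -- the contradiction
  set C : ℝ := ∫ x, |hstar x * g x| ∂μ with hCdef
  have hfinal : ∀ N : ℕ, ((N:ℝ)+1) < C := by
    intro N
    have hint_f : Integrable (fun x => |f N x * g x|) μ := (h (f N) (hfmem N)).abs
    have hint_hsum : Integrable (fun x => |hsum N x * g x|) μ := (h (hsum N) (hsum_mem N)).abs
    have hint_hstar : Integrable (fun x => |hstar x * g x|) μ := (h hstar hstar_mem).abs
    have step1 : (2*K)^N * ((N:ℝ)+1) * r^N < r^N * ∫ x, |f N x * g x| ∂μ := by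
      have := hfint N
      have hrN : (0:ℝ) < r^N := pow_pos hrpos N
      nlinarith [this, hrN]
    have heq : (2*K)^N * ((N:ℝ)+1) * r^N = (N:ℝ)+1 := by
      have : (2*K)^N * r^N = 1 := by
        rw [← mul_pow]
        rw [show (2*K)*r = 1 by rw [mul_comm]; exact hr2K]
        exact one_pow N
      nlinarith [this]
    have step2 : r^N * ∫ x, |f N x * g x| ∂μ ≤ ∫ x, |hsum N x * g x| ∂μ := by
      rw [← integral_const_mul]
      apply integral_mono (hint_f.const_mul _) hint_hsum
      intro x
      have h1 : r^N * |f N x| ≤ hsum N x := by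
        rw [hsum_apply]
        exact Finset.single_le_sum (f := fun n => a n x) (fun n _ => ha_nonneg n x)
          (Finset.self_mem_range_succ N)
      calc r^N * |f N x * g x| = (r^N * |f N x|) * |g x| := by rw [abs_mul]; ring
        _ ≤ hsum N x * |g x| :=
            mul_le_mul_of_nonneg_right h1 (abs_nonneg _)
        _ = |hsum N x * g x| := by rw [abs_mul, abs_of_nonneg (hsum_nonneg N x)]
    have step3 : ∫ x, |hsum N x * g x| ∂μ ≤ C := by
      apply integral_mono_ae hint_hsum hint_hstar
      filter_upwards [hsum_le] with x hx
      rw [abs_mul, abs_mul, abs_of_nonneg (hsum_nonneg N x), abs_of_nonneg (hstar_nonneg x)]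
      exact mul_le_mul_of_nonneg_right (hx N) (abs_nonneg _)
    calc ((N:ℝ)+1) = (2*K)^N * ((N:ℝ)+1) * r^N := heq.symm
      _ < r^N * ∫ x, |f N x * g x| ∂μ := step1
      _ ≤ ∫ x, |hsum N x * g x| ∂μ := step2
      _ ≤ C := step3
  obtain ⟨N, hN⟩ := exists_nat_gt C
  exact absurd (hfinal N) (by push_neg; linarith)
end

section
/- Let E be a basis of sets in a σ-finite measure space Ω and let X be a quasi-Banach function space over Ω such that the maximal operator M^E : X → X is bounded. Then for every E ∈ E, one has 1_E ∈ X and 1_E ∈ X', with |E| ≤ ‖1_E‖_X ‖1_E‖_{X'} ≤ ‖M^E‖_{X→X} |E|. In particular, X' is saturated and hence a Banach function space. -/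
open MeasureTheory ENNReal

/-- A basis of sets in a σ-finite measure space `(Ω, μ)`: a collection of measurable
sets of finite positive measure such that any two points lie in a common member
(in particular the sets cover `Ω`), admitting a countable subcollection
approximating measures from above. -/
structure SetBasis (Ω : Type*) [MeasurableSpace Ω] (μ : Measure Ω) where
  sets : Set (Set Ω)
  measurableSet : ∀ E ∈ sets, MeasurableSet E
  measure_pos : ∀ E ∈ sets, 0 < μ E
  measure_lt_top : ∀ E ∈ sets, μ E < ∞
  two_point : ∀ x y : Ω, ∃ E ∈ sets, x ∈ E ∧ y ∈ E
  countable_approx : ∃ 𝓒 ⊆ sets, 𝓒.Countable ∧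
    ∀ ε : ℝ≥0∞, 0 < ε → ∀ E ∈ sets, ∃ F ∈ 𝓒, E ⊆ F ∧ μ F ≤ (1 + ε) * μ E

/-- The normalized `Lᵖ`-average `⟨f⟩_{p,E} = (μ E)^{-1/p} ‖f · 1_E‖_{Lᵖ(μ)}`. -/
noncomputable def avg {Ω : Type*} [MeasurableSpace Ω] (μ : Measure Ω)
    (p : ℝ≥0∞) (E : Set Ω) (f : Ω → ℝ) : ℝ≥0∞ :=
  μ E ^ (-(1 / p).toReal) * eLpNorm (E.indicator f) p μ

/-- The maximal operator `M_p^𝓑 f = sup_{E ∈ 𝓑} ⟨f⟩_{p,E} 1_E` associated to a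
collection of sets `𝓑`. -/
noncomputable def maximalFn {Ω : Type*} [MeasurableSpace Ω] (μ : Measure Ω)
    (𝓑 : Set (Set Ω)) (p : ℝ≥0∞) (f : Ω → ℝ) (x : Ω) : ℝ≥0∞ :=
  ⨆ E ∈ {E ∈ 𝓑 | x ∈ E}, avg μ p E f

/-- The real-valued maximal operator `M_p^𝓑` (via `toReal`). -/
noncomputable def maximalR {Ω : Type*} [MeasurableSpace Ω] (μ : Measure Ω)
    (𝓑 : Set (Set Ω)) (p : ℝ≥0∞) (f : Ω → ℝ) (x : Ω) : ℝ :=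
  (maximalFn μ 𝓑 p f x).toReal

/-- An operator `T` is bounded on the function lattice given by (`mem`, `nrm`). -/
def IsBoundedOp {Ω : Type*} (mem : (Ω → ℝ) → Prop) (nrm : (Ω → ℝ) → ℝ)
    (T : (Ω → ℝ) → Ω → ℝ) : Prop :=
  ∃ C : ℝ, 0 ≤ C ∧ ∀ f, mem f → mem (T f) ∧ nrm (T f) ≤ C * nrm f

/-- The operator norm of `T` on the function lattice given by (`mem`, `nrm`). -/
noncomputable def opNorm {Ω : Type*} (mem : (Ω → ℝ) → Prop) (nrm : (Ω → ℝ) → ℝ)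
    (T : (Ω → ℝ) → Ω → ℝ) : ℝ :=
  sInf {C : ℝ | 0 ≤ C ∧ ∀ f, mem f → mem (T f) ∧ nrm (T f) ≤ C * nrm f}

section
variable {Ω : Type*} [MeasurableSpace Ω] {μ : Measure Ω}

lemma avg_one_eq {E : Set Ω} (hE : MeasurableSet E) (f : Ω → ℝ) :
    avg μ 1 E f = (μ E)⁻¹ * ∫⁻ x in E, ‖f x‖₊ ∂μ := by
  rw [avg, eLpNorm_one_eq_lintegral_enorm]
  congr 1
  · rw [show (-(1/(1:ℝ≥0∞)).toReal) = (-1:ℝ) by norm_num, ENNReal.rpow_neg_one]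
  · rw [← lintegral_indicator hE]
    congr 1 with x
    by_cases h : x ∈ E <;> simp [h, enorm_eq_nnnorm]

lemma le_maximalFn {𝓑 : Set (Set Ω)} {E : Set Ω} (hE : E ∈ 𝓑) {x : Ω} (hx : x ∈ E)
    (f : Ω → ℝ) : avg μ 1 E f ≤ maximalFn μ 𝓑 1 f x := by
  apply le_biSup (f := fun E => avg μ 1 E f)
  exact ⟨hE, hx⟩

lemma maximalFn_le (𝓔 : SetBasis Ω μ) {f : Ω → ℝ} {c : ℝ≥0∞}
    (hf : ∀ y, (‖f y‖₊ : ℝ≥0∞) ≤ c) (x : Ω) : maximalFn μ 𝓔.sets 1 f x ≤ c := by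
  apply iSup₂_le
  rintro E ⟨hE, -⟩
  rw [avg_one_eq (𝓔.measurableSet E hE)]
  calc (μ E)⁻¹ * ∫⁻ x in E, ‖f x‖₊ ∂μ ≤ (μ E)⁻¹ * (c * μ E) := by
        gcongr
        calc ∫⁻ x in E, (‖f x‖₊ : ℝ≥0∞) ∂μ ≤ ∫⁻ _ in E, c ∂μ := lintegral_mono fun y => hf y
        _ = c * μ E := by simp [Measure.restrict_apply, mul_comm]
  _ = c := by
        rw [mul_comm c, ← mul_assoc, ENNReal.inv_mul_cancel (𝓔.measure_pos E hE).ne' (𝓔.measure_lt_top E hE).ne, one_mul]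

end
section
variable {Ω : Type*} [MeasurableSpace Ω] {μ : Measure Ω}

lemma norm_indicator_pos (X : QBFS Ω μ) {E : Set Ω} (hpos : 0 < μ E)
    (hmem : X.mem (E.indicator fun _ => (1:ℝ))) :
    0 < X.norm (E.indicator fun _ => (1:ℝ)) := by
  rcases (X.norm_nonneg _ hmem).lt_or_eq with h | h
  · exact h
  exfalso
  have h0 : (E.indicator fun _ => (1:ℝ)) =ᵐ[μ] 0 := (X.norm_eq_zero_iff _ hmem).1 h.symm
  have h1 : μ {x | E.indicator (fun _ => (1:ℝ)) x ≠ 0} = 0 := h0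
  have h2 : E ⊆ {x | E.indicator (fun _ => (1:ℝ)) x ≠ 0} := by
    intro x hx; simp [Set.mem_setOf_eq, Set.indicator_of_mem hx, hx]
  exact hpos.ne' (measure_mono_null h2 h1)

lemma maximalR_nonneg (𝓑 : Set (Set Ω)) (f : Ω → ℝ) (x : Ω) :
    0 ≤ maximalR μ 𝓑 1 f x := ENNReal.toReal_nonneg

lemma mem_indicator_of_basis (X : QBFS Ω μ) (𝓔 : SetBasis Ω μ)
    (hb : IsBoundedOp X.mem X.norm (maximalR μ 𝓔.sets 1))
    {E : Set Ω} (hE : E ∈ 𝓔.sets) : X.mem (E.indicator fun _ => (1:ℝ)) := by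
  obtain ⟨C, hC0, hC⟩ := hb
  have hEm := 𝓔.measurableSet E hE
  have hEpos := 𝓔.measure_pos E hE
  have hEfin := 𝓔.measure_lt_top E hE
  obtain ⟨F, hFE, hFm, hFpos, hF⟩ := X.saturation E hEm hEpos
  set c : ℝ := ((μ E)⁻¹ * μ F).toReal with hc
  have hcfin : (μ E)⁻¹ * μ F ≠ ∞ :=
    ENNReal.mul_ne_top (ENNReal.inv_ne_top.2 hEpos.ne') ((lt_of_le_of_lt (measure_mono hFE) hEfin).ne)
  have hcpos : 0 < c := ENNReal.toReal_pos
    (mul_ne_zero (ENNReal.inv_ne_zero.2 hEfin.ne) hFpos.ne') hcfin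
  have hind1 : ∀ y, (‖F.indicator (fun _ => (1:ℝ)) y‖₊ : ℝ≥0∞) ≤ 1 := by
    intro y; by_cases h : y ∈ F <;> simp [h]
  have hub : ∀ x, maximalFn μ 𝓔.sets 1 (F.indicator fun _ => (1:ℝ)) x ≤ 1 :=
    maximalFn_le 𝓔 hind1
  have havg : avg μ 1 E (F.indicator fun _ => (1:ℝ)) = (μ E)⁻¹ * μ F := by
    rw [avg_one_eq hEm]
    congr 1
    have hpt : ∀ x, (‖F.indicator (fun _ => (1:ℝ)) x‖₊ : ℝ≥0∞)
        = F.indicator (fun _ => (1:ℝ≥0∞)) x := by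
      intro x; by_cases h : x ∈ F <;> simp [h]
    rw [lintegral_congr hpt, lintegral_indicator hFm, setLIntegral_one,
      Measure.restrict_apply hFm, Set.inter_eq_self_of_subset_left hFE]
  have hlow : ∀ x ∈ E, c ≤ maximalR μ 𝓔.sets 1 (F.indicator fun _ => (1:ℝ)) x := by
    intro x hx
    have h1 := le_maximalFn (μ := μ) hE hx (F.indicator fun _ => (1:ℝ))
    rw [havg] at h1
    exact ENNReal.toReal_mono (((hub x).trans_lt (by norm_num)).ne) h1
  have hMmem := (hC _ hF).1
  have hmem2 := X.smul_mem c⁻¹ _ hMmem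
  refine (X.ideal _ _ hmem2 ((measurable_const.indicator hEm).aestronglyMeasurable) ?_).1
  refine Filter.Eventually.of_forall fun x => ?_
  by_cases h : x ∈ E
  · have hM := hlow x h
    have h2 : (1:ℝ) ≤ c⁻¹ * maximalR μ 𝓔.sets 1 (F.indicator fun _ => (1:ℝ)) x := by
      have h3 := mul_le_mul_of_nonneg_left hM (inv_nonneg.2 hcpos.le)
      rwa [inv_mul_cancel₀ hcpos.ne'] at h3
    calc |E.indicator (fun _ => (1:ℝ)) x| = 1 := by simp [h]
      _ ≤ c⁻¹ * maximalR μ 𝓔.sets 1 (F.indicator fun _ => (1:ℝ)) x := h2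
      _ ≤ |(c⁻¹ • maximalR μ 𝓔.sets 1 (F.indicator fun _ => (1:ℝ))) x| := by
          rw [Pi.smul_apply, smul_eq_mul]; exact le_abs_self _
  · simp [h, abs_nonneg]; positivity

end
section
variable {Ω : Type*} [MeasurableSpace Ω] {μ : Measure Ω}

lemma iSup_min_nat {a : ℝ≥0∞} (ha : a ≠ ∞) : ⨆ n : ℕ, min a (n : ℝ≥0∞) = a := by
  apply le_antisymm (iSup_le fun n => min_le_left _ _)
  obtain ⟨n, hn⟩ := ENNReal.exists_nat_gt ha
  calc a = min a (n : ℝ≥0∞) := (min_eq_left hn.le).symm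
    _ ≤ ⨆ n : ℕ, min a (n : ℝ≥0∞) := le_iSup (fun n : ℕ => min a (n : ℝ≥0∞)) n

lemma setLIntegral_le_of_bounded (X : QBFS Ω μ) (𝓔 : SetBasis Ω μ)
    {E : Set Ω} (hE : E ∈ 𝓔.sets)
    (h1E : X.mem (E.indicator fun _ => (1:ℝ)))
    {C : ℝ} (hC0 : 0 ≤ C)
    (hC : ∀ f, X.mem f → X.mem (maximalR μ 𝓔.sets 1 f) ∧
      X.norm (maximalR μ 𝓔.sets 1 f) ≤ C * X.norm f)
    {f : Ω → ℝ} (hf : X.mem f) :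
    ∫⁻ x in E, ‖f x‖₊ ∂μ ≤
      ENNReal.ofReal (C * X.norm f / X.norm (E.indicator fun _ => (1:ℝ))) * μ E := by
  have hEm := 𝓔.measurableSet E hE
  have hEpos := 𝓔.measure_pos E hE
  have hEfin := 𝓔.measure_lt_top E hE
  have hnpos : 0 < X.norm (E.indicator fun _ => (1:ℝ)) := norm_indicator_pos X hEpos h1E
  have hfm := X.aestronglyMeasurable f hf
  set g : ℕ → Ω → ℝ := fun n x => min |f x| n with hg
  have hgnn : ∀ n x, 0 ≤ g n x := fun n x => le_min (abs_nonneg _) (Nat.cast_nonneg n)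
  have hgabs : ∀ n x, |g n x| ≤ |f x| := fun n x => by
    rw [abs_of_nonneg (hgnn n x)]; exact min_le_left _ _
  have hgm : ∀ n, AEStronglyMeasurable (g n) μ := fun n =>
    (((measurable_abs.comp_aemeasurable hfm.aemeasurable).min aemeasurable_const).aestronglyMeasurable)
  have hgmem : ∀ n, X.mem (g n) := fun n =>
    (X.ideal f (g n) hf (hgm n) (Filter.Eventually.of_forall (hgabs n))).1
  have hgnorm : ∀ n, X.norm (g n) ≤ X.norm f := fun n =>
    (X.ideal f (g n) hf (hgm n) (Filter.Eventually.of_forall (hgabs n))).2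
  have hptE : ∀ n x, (‖g n x‖₊ : ℝ≥0∞) = min (ENNReal.ofReal |f x|) (n : ℝ≥0∞) := by
    intro n x
    rw [← enorm_eq_nnnorm, Real.enorm_eq_ofReal_abs, abs_of_nonneg (hgnn n x)]
    simp only [hg]
    rcases le_total |f x| (n : ℝ) with h | h
    · rw [min_eq_left h, min_eq_left (by
        calc ENNReal.ofReal |f x| ≤ ENNReal.ofReal (n:ℝ) := ENNReal.ofReal_le_ofReal h
          _ = (n : ℝ≥0∞) := ENNReal.ofReal_natCast n)]
    · rw [min_eq_right h, min_eq_right (by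
        calc (n : ℝ≥0∞) = ENNReal.ofReal (n:ℝ) := (ENNReal.ofReal_natCast n).symm
          _ ≤ ENNReal.ofReal |f x| := ENNReal.ofReal_le_ofReal h)]
      exact ENNReal.ofReal_natCast n
  have hgle : ∀ n y, (‖g n y‖₊ : ℝ≥0∞) ≤ (n : ℝ≥0∞) := fun n y => by
    rw [hptE]; exact min_le_right _ _
  have key : ∀ n, ∫⁻ x in E, ‖g n x‖₊ ∂μ ≤
      ENNReal.ofReal (C * X.norm f / X.norm (E.indicator fun _ => (1:ℝ))) * μ E := by
    intro n
    set I := ∫⁻ x in E, (‖g n x‖₊ : ℝ≥0∞) ∂μ with hI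
    have hIle : I ≤ (n : ℝ≥0∞) * μ E := by
      calc I ≤ ∫⁻ _ in E, (n : ℝ≥0∞) ∂μ := lintegral_mono fun y => hgle n y
        _ = (n : ℝ≥0∞) * μ E := by simp [mul_comm]
    have hIfin : I ≠ ∞ := (hIle.trans_lt (ENNReal.mul_lt_top (by simp) hEfin)).ne
    set a := ((μ E)⁻¹ * I).toReal with ha
    have hafin : (μ E)⁻¹ * I ≠ ∞ := ENNReal.mul_ne_top (ENNReal.inv_ne_top.2 hEpos.ne') hIfin
    have hann : 0 ≤ a := ENNReal.toReal_nonneg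
    have hub : ∀ x, maximalFn μ 𝓔.sets 1 (g n) x ≤ (n : ℝ≥0∞) := maximalFn_le 𝓔 (hgle n)
    have hlow : ∀ x ∈ E, a ≤ maximalR μ 𝓔.sets 1 (g n) x := by
      intro x hx
      have h1 := le_maximalFn (μ := μ) hE hx (g n)
      rw [avg_one_eq hEm, ← hI] at h1
      exact ENNReal.toReal_mono (((hub x).trans_lt (ENNReal.natCast_lt_top n)).ne) h1
    have hMmem := (hC _ (hgmem n)).1
    have hsm : AEStronglyMeasurable (a • E.indicator fun _ => (1:ℝ)) μ :=
      ((measurable_const.indicator hEm).aestronglyMeasurable).const_smul a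
    have hnle := (X.ideal _ _ hMmem hsm (Filter.Eventually.of_forall fun x => ?_)).2
    swap
    · by_cases h : x ∈ E
      · calc |(a • E.indicator fun _ => (1:ℝ)) x| = a := by
              simp [Set.indicator_of_mem h, abs_of_nonneg hann]
          _ ≤ maximalR μ 𝓔.sets 1 (g n) x := hlow x h
          _ ≤ |maximalR μ 𝓔.sets 1 (g n) x| := le_abs_self _
      · simp [Set.indicator_of_notMem h, abs_nonneg]
    have hsmul : X.norm (a • E.indicator fun _ => (1:ℝ)) =
        a * X.norm (E.indicator fun _ => (1:ℝ)) := by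
      rw [X.norm_smul a _ h1E, abs_of_nonneg hann]
    have hstep : a * X.norm (E.indicator fun _ => (1:ℝ)) ≤ C * X.norm f := by
      rw [← hsmul]
      exact hnle.trans ((hC _ (hgmem n)).2.trans
        (mul_le_mul_of_nonneg_left (hgnorm n) hC0))
    have haC : a ≤ C * X.norm f / X.norm (E.indicator fun _ => (1:ℝ)) := by
      rw [le_div_iff₀ hnpos]; exact hstep
    calc I = ((μ E)⁻¹ * I) * μ E := by
          rw [mul_comm ((μ E)⁻¹), mul_assoc,
            ENNReal.inv_mul_cancel hEpos.ne' hEfin.ne, mul_one]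
      _ = ENNReal.ofReal a * μ E := by rw [ENNReal.ofReal_toReal hafin]
      _ ≤ _ := mul_le_mul_left (ENNReal.ofReal_le_ofReal haC) _
  -- monotone convergence
  have haem : ∀ n, AEMeasurable (fun x => (‖g n x‖₊ : ℝ≥0∞)) (μ.restrict E) := by
    intro n
    have h1 : AEMeasurable f (μ.restrict E) := hfm.aemeasurable.restrict
    exact (((measurable_abs.comp_aemeasurable h1).min aemeasurable_const).enorm).congr
      (Filter.Eventually.of_forall fun x => rfl)
  have hmono : ∀ᵐ x ∂(μ.restrict E), Monotone fun n => (‖g n x‖₊ : ℝ≥0∞) := by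
    refine Filter.Eventually.of_forall fun x => ?_
    intro m k hmk
    show (‖g m x‖₊ : ℝ≥0∞) ≤ (‖g k x‖₊ : ℝ≥0∞)
    rw [hptE, hptE]
    exact min_le_min le_rfl (by exact_mod_cast Nat.cast_le.2 hmk)
  have hlim : ∫⁻ x in E, ‖f x‖₊ ∂μ = ⨆ n, ∫⁻ x in E, ‖g n x‖₊ ∂μ := by
    rw [← lintegral_iSup' haem hmono]
    apply lintegral_congr
    intro x
    rw [← enorm_eq_nnnorm, Real.enorm_eq_ofReal_abs]
    simp only [hptE]
    exact (iSup_min_nat ENNReal.ofReal_ne_top).symm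
  rw [hlim]
  exact iSup_le key

end
section
variable {Ω : Type*} [MeasurableSpace Ω] {μ : Measure Ω}

lemma lintegral_mul_indicator_eq {E : Set Ω} (hEm : MeasurableSet E) (f : Ω → ℝ) :
    ∫⁻ x, ‖f x * E.indicator (fun _ => (1:ℝ)) x‖₊ ∂μ = ∫⁻ x in E, ‖f x‖₊ ∂μ := by
  rw [← lintegral_indicator hEm]
  apply lintegral_congr
  intro x
  by_cases h : x ∈ E <;> simp [h]

lemma kmem_indicator (X : QBFS Ω μ) (𝓔 : SetBasis Ω μ)
    {C : ℝ} (hC0 : 0 ≤ C)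
    (hC : ∀ f, X.mem f → X.mem (maximalR μ 𝓔.sets 1 f) ∧
      X.norm (maximalR μ 𝓔.sets 1 f) ≤ C * X.norm f)
    {E : Set Ω} (hE : E ∈ 𝓔.sets)
    (h1E : X.mem (E.indicator fun _ => (1:ℝ))) :
    kMem μ X.mem (E.indicator fun _ => (1:ℝ)) := by
  have hEm := 𝓔.measurableSet E hE
  refine ⟨(measurable_const.indicator hEm).aestronglyMeasurable, fun f hf => ?_⟩
  have hb1 := setLIntegral_le_of_bounded X 𝓔 hE h1E hC0 hC hf
  refine ⟨(X.aestronglyMeasurable f hf).mul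
    ((measurable_const.indicator hEm).aestronglyMeasurable), ?_⟩
  show (∫⁻ x, ‖f x * E.indicator (fun _ => (1:ℝ)) x‖₊ ∂μ) < ∞
  rw [lintegral_mul_indicator_eq hEm]
  exact lt_of_le_of_lt hb1 (ENNReal.mul_lt_top (by simp) (𝓔.measure_lt_top E hE))

end
/-- If `M^𝓔 : X → X` is bounded, then for every `E ∈ 𝓔` one has
`1_E ∈ X` and `1_E ∈ X'` with `μ(E) ≤ ‖1_E‖_X ‖1_E‖_{X'} ≤ ‖M^𝓔‖_{X→X} μ(E)`;
in particular `X'` is saturated. -/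
theorem statement10 {Ω : Type*} [MeasurableSpace Ω] {μ : Measure Ω} [SigmaFinite μ]
    (X : QBFS Ω μ) (𝓔 : SetBasis Ω μ)
    (hb : IsBoundedOp X.mem X.norm (maximalR μ 𝓔.sets 1)) :
    (∀ E ∈ 𝓔.sets,
      X.mem (E.indicator fun _ => (1 : ℝ)) ∧
      kMem μ X.mem (E.indicator fun _ => (1 : ℝ)) ∧
      (μ E).toReal ≤ X.norm (E.indicator fun _ => (1 : ℝ)) *
          kNorm μ X.mem X.norm (E.indicator fun _ => (1 : ℝ)) ∧
      X.norm (E.indicator fun _ => (1 : ℝ)) *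
          kNorm μ X.mem X.norm (E.indicator fun _ => (1 : ℝ)) ≤
        opNorm X.mem X.norm (maximalR μ 𝓔.sets 1) * (μ E).toReal) ∧
    (∀ E : Set Ω, MeasurableSet E → 0 < μ E →
      ∃ F, F ⊆ E ∧ MeasurableSet F ∧ 0 < μ F ∧
        kMem μ X.mem (F.indicator fun _ => (1 : ℝ))) := by
  obtain ⟨C₀, hC₀0, hC₀⟩ := hb
  have hmem : ∀ E ∈ 𝓔.sets, X.mem (E.indicator fun _ => (1:ℝ)) :=
    fun E hE => mem_indicator_of_basis X 𝓔 ⟨C₀, hC₀0, hC₀⟩ hE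
  have hkmem : ∀ E ∈ 𝓔.sets, kMem μ X.mem (E.indicator fun _ => (1:ℝ)) :=
    fun E hE => kmem_indicator X 𝓔 hC₀0 hC₀ hE (hmem E hE)
  constructor
  · intro E hE
    have hEm := 𝓔.measurableSet E hE
    have hEpos := 𝓔.measure_pos E hE
    have hEfin := 𝓔.measure_lt_top E hE
    have h1E := hmem E hE
    have hnpos := norm_indicator_pos X hEpos h1E
    have hμpos : 0 < (μ E).toReal := ENNReal.toReal_pos hEpos.ne' hEfin.ne
    set S := {c : ℝ | ∃ f, X.mem f ∧ X.norm f = 1 ∧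
      c = ∫ x, |f x * E.indicator (fun _ => (1:ℝ)) x| ∂μ} with hS
    -- upper bound for members of S, for any admissible C
    have hSbound : ∀ C : ℝ, 0 ≤ C → (∀ f, X.mem f → X.mem (maximalR μ 𝓔.sets 1 f) ∧
        X.norm (maximalR μ 𝓔.sets 1 f) ≤ C * X.norm f) →
        ∀ c ∈ S, c ≤ C * (μ E).toReal / X.norm (E.indicator fun _ => (1:ℝ)) := by
      rintro C hCge hC c ⟨f, hf, hf1, rfl⟩
      have hb1 := setLIntegral_le_of_bounded X 𝓔 hE h1E hCge hC hf
      rw [hf1, mul_one] at hb1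
      have hint : ∫ x, |f x * E.indicator (fun _ => (1:ℝ)) x| ∂μ
          = (∫⁻ x, ENNReal.ofReal |f x * E.indicator (fun _ => (1:ℝ)) x| ∂μ).toReal := by
        apply integral_eq_lintegral_of_nonneg_ae (Filter.Eventually.of_forall fun x => abs_nonneg _)
        have hsm0 : AEStronglyMeasurable (E.indicator fun _ => (1:ℝ)) μ :=
          (measurable_const.indicator hEm).aestronglyMeasurable
        have hsm := ((X.aestronglyMeasurable f hf).mul hsm0).norm
        simpa only [Real.norm_eq_abs, Pi.mul_apply] using hsm
      have heq : ∫⁻ x, ENNReal.ofReal |f x * E.indicator (fun _ => (1:ℝ)) x| ∂μ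
          = ∫⁻ x in E, ‖f x‖₊ ∂μ := by
        rw [← lintegral_mul_indicator_eq hEm f]
        apply lintegral_congr
        intro x
        rw [← enorm_eq_nnnorm, Real.enorm_eq_ofReal_abs]
      rw [hint, heq]
      calc (∫⁻ x in E, (‖f x‖₊ : ℝ≥0∞) ∂μ).toReal
          ≤ (ENNReal.ofReal (C / X.norm (E.indicator fun _ => (1:ℝ))) * μ E).toReal := by
            apply ENNReal.toReal_mono _ hb1
            exact (ENNReal.mul_lt_top (by simp) hEfin).ne
        _ = C / X.norm (E.indicator fun _ => (1:ℝ)) * (μ E).toReal := by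
            rw [ENNReal.toReal_mul, ENNReal.toReal_ofReal (by positivity)]
        _ = C * (μ E).toReal / X.norm (E.indicator fun _ => (1:ℝ)) := by ring
    have hSbdd : BddAbove S :=
      ⟨_, fun c hc => hSbound C₀ hC₀0 hC₀ c hc⟩
    -- the witness f₀
    set f₀ : Ω → ℝ := (X.norm (E.indicator fun _ => (1:ℝ)))⁻¹ • (E.indicator fun _ => (1:ℝ))
      with hf₀
    have hf₀mem : X.mem f₀ := X.smul_mem _ _ h1E
    have hf₀norm : X.norm f₀ = 1 := by
      rw [hf₀, X.norm_smul _ _ h1E, abs_of_nonneg (inv_nonneg.2 hnpos.le),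
        inv_mul_cancel₀ hnpos.ne']
    have hc₀ : ∫ x, |f₀ x * E.indicator (fun _ => (1:ℝ)) x| ∂μ
        = (X.norm (E.indicator fun _ => (1:ℝ)))⁻¹ * (μ E).toReal := by
      have hpt : ∀ x, |f₀ x * E.indicator (fun _ => (1:ℝ)) x|
          = (X.norm (E.indicator fun _ => (1:ℝ)))⁻¹ * E.indicator (fun _ => (1:ℝ)) x := by
        intro x
        by_cases h : x ∈ E <;>
          simp [hf₀, h, abs_of_nonneg (inv_nonneg.2 hnpos.le)]
      simp only [hpt]
      simp only [← smul_eq_mul]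
      rw [integral_smul]
      simp only [smul_eq_mul]
      congr 1
      exact integral_indicator_one hEm
    have hc₀S : (X.norm (E.indicator fun _ => (1:ℝ)))⁻¹ * (μ E).toReal ∈ S :=
      ⟨f₀, hf₀mem, hf₀norm, hc₀.symm⟩
    have hSne : S.Nonempty := ⟨_, hc₀S⟩
    refine ⟨h1E, hkmem E hE, ?_, ?_⟩
    · -- lower bound
      have h1 : (X.norm (E.indicator fun _ => (1:ℝ)))⁻¹ * (μ E).toReal ≤ sSup S :=
        le_csSup hSbdd hc₀S
      have := mul_le_mul_of_nonneg_left h1 hnpos.le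
      rw [← mul_assoc, mul_inv_cancel₀ hnpos.ne', one_mul] at this
      exact this
    · -- upper bound
      set T := {C : ℝ | 0 ≤ C ∧ ∀ f, X.mem f → X.mem (maximalR μ 𝓔.sets 1 f) ∧
        X.norm (maximalR μ 𝓔.sets 1 f) ≤ C * X.norm f} with hT
    
      have hTne : T.Nonempty := ⟨C₀, hC₀0, hC₀⟩
      have hkey : ∀ C ∈ T, X.norm (E.indicator fun _ => (1:ℝ)) * sSup S ≤ C * (μ E).toReal := by
        rintro C ⟨hCge, hC⟩
        have h1 : sSup S ≤ C * (μ E).toReal / X.norm (E.indicator fun _ => (1:ℝ)) :=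
          csSup_le hSne (hSbound C hCge hC)
        have h2 := mul_le_mul_of_nonneg_left h1 hnpos.le
        rwa [mul_div_cancel₀ _ hnpos.ne'] at h2
      have h3 : X.norm (E.indicator fun _ => (1:ℝ)) * sSup S / (μ E).toReal ≤ sInf T := by
        apply le_csInf hTne
        intro C hC
        rw [div_le_iff₀ hμpos]
        exact hkey C hC
      have h4 := mul_le_mul_of_nonneg_right h3 hμpos.le
      rwa [div_mul_cancel₀ _ hμpos.ne'] at h4
  · -- saturation of X'
    intro E hEm hEpos
    obtain ⟨𝓒, h𝓒sub, h𝓒c, h𝓒⟩ := 𝓔.countable_approx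
    have hcover : ∀ x : Ω, ∃ G ∈ 𝓒, x ∈ G := by
      intro x
      obtain ⟨E', hE', hx, -⟩ := 𝓔.two_point x x
      obtain ⟨G, hG, hsub, -⟩ := h𝓒 1 one_pos E' hE'
      exact ⟨G, hG, hsub hx⟩
    have hex : ¬ ∀ G ∈ 𝓒, μ (E ∩ G) = 0 := by
      intro hall
      apply hEpos.ne'
      have hEsub : E ⊆ ⋃ G ∈ 𝓒, E ∩ G := by
        intro x hx
        obtain ⟨G, hG, hxG⟩ := hcover x
        exact Set.mem_biUnion hG ⟨hx, hxG⟩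
      exact measure_mono_null hEsub ((measure_biUnion_null_iff h𝓒c).2 hall)
    push_neg at hex
    obtain ⟨G, hG, hne⟩ := hex
    have hGE : G ∈ 𝓔.sets := h𝓒sub hG
    have hGm := 𝓔.measurableSet G hGE
    have hGk := hkmem G hGE
    refine ⟨E ∩ G, Set.inter_subset_left, hEm.inter hGm, zero_lt_iff.2 hne, ?_⟩
    refine ⟨(measurable_const.indicator (hEm.inter hGm)).aestronglyMeasurable, fun f hf => ?_⟩
    apply (hGk.2 f hf).mono ((X.aestronglyMeasurable f hf).mul
      ((measurable_const.indicator (hEm.inter hGm)).aestronglyMeasurable))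
    refine Filter.Eventually.of_forall fun x => ?_
    show ‖f x * (E ∩ G).indicator (fun _ => (1:ℝ)) x‖ ≤ ‖f x * G.indicator (fun _ => (1:ℝ)) x‖
    by_cases h : x ∈ E ∩ G
    · have h1 : (E ∩ G).indicator (fun _ => (1:ℝ)) x = 1 := Set.indicator_of_mem h _
      have h2 : G.indicator (fun _ => (1:ℝ)) x = 1 := Set.indicator_of_mem h.2 _
      rw [h1, h2]
    · have h1 : (E ∩ G).indicator (fun _ => (1:ℝ)) x = 0 := Set.indicator_of_notMem h _
      rw [h1, mul_zero, norm_zero]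
      exact norm_nonneg _
end

section
/- Let p₁,p₂ ∈ (0,∞] with 1/p := 1/p₁ + 1/p₂ > 0, q ∈ [p,∞), 1/q_j := (1/p_j)·(p/q), and let v₁, v₂ be weights on ℝ^d. Then the pointwise product of weighted Morrey spaces factorizes: L^{p₁,q₁}_{v₁}(ℝ^d) · L^{p₂,q₂}_{v₂}(ℝ^d) = L^{p,q}_v(ℝ^d) with equal (quasi-)norms, where v = v₁v₂. -/
open MeasureTheory ENNReal

/-- The collection of (axis-parallel, nondegenerate, closed) cubes in `ℝ^d`. -/
def cubes (d : ℕ) : Set (Set (Fin d → ℝ)) :=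
  {Q | ∃ (c : Fin d → ℝ) (h : ℝ), 0 < h ∧ Q = {x | ∀ i, c i ≤ x i ∧ x i ≤ c i + h}}

/-- The weighted Morrey norm `‖g‖_{𝓛^{p,q}_w} = sup_Q |Q|^{1/q} ⟨g w⟩_{p,Q}`. -/
noncomputable def morreyNorm {d : ℕ} (p q : ℝ≥0∞) (w : (Fin d → ℝ) → ℝ)
    (g : (Fin d → ℝ) → ℝ) : ℝ≥0∞ :=
  ⨆ Q ∈ cubes d, volume Q ^ (1 / q).toReal * avg volume p Q fun x => g x * w x

lemma cubes_nonempty (d : ℕ) : (cubes d).Nonempty :=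
  ⟨_, 0, 1, one_pos, rfl⟩

lemma cube_meas {d : ℕ} {Q : Set (Fin d → ℝ)} (hQ : Q ∈ cubes d) :
    MeasurableSet Q ∧ volume Q ≠ 0 ∧ volume Q ≠ ∞ := by
  obtain ⟨c, l, hl, rfl⟩ := hQ
  have hQ' : {x : Fin d → ℝ | ∀ i, c i ≤ x i ∧ x i ≤ c i + l}
      = Set.univ.pi fun i => Set.Icc (c i) (c i + l) := by
    ext x
    simp only [Set.mem_setOf_eq, Set.mem_pi, Set.mem_univ, Set.mem_Icc, forall_const]
  rw [hQ']
  have hvol : volume (Set.univ.pi fun i => Set.Icc (c i) (c i + l))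
      = ENNReal.ofReal l ^ d := by
    rw [volume_pi_pi]
    simp [Real.volume_Icc]
  refine ⟨MeasurableSet.univ_pi fun i => measurableSet_Icc, ?_, ?_⟩
  · rw [hvol]
    positivity
  · rw [hvol]
    exact (pow_ne_top ofReal_ne_top)

lemma biSup_rpow {ι : Type*} {S : Set ι} (hS : S.Nonempty) (F : ι → ℝ≥0∞) {r : ℝ}
    (hr : 0 ≤ r) : (⨆ Q ∈ S, (F Q) ^ r) = (⨆ Q ∈ S, F Q) ^ r := by
  rcases eq_or_lt_of_le hr with hr0 | hr
  · simp only [← hr0, ENNReal.rpow_zero]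
    exact biSup_const hS
  refine le_antisymm (iSup₂_le fun Q hQ => ENNReal.rpow_le_rpow (le_biSup F hQ) hr.le) ?_
  have key : ∀ x : ℝ≥0∞, (x ^ r) ^ (1 / r) = x := fun x => by
    rw [← ENNReal.rpow_mul, mul_one_div_cancel hr.ne', ENNReal.rpow_one]
  calc (⨆ Q ∈ S, F Q) ^ r
      ≤ ((⨆ Q ∈ S, (F Q) ^ r) ^ (1 / r)) ^ r := by
        refine ENNReal.rpow_le_rpow ?_ hr.le
        refine iSup₂_le fun Q hQ => ?_
        rw [← key (F Q)]
        exact ENNReal.rpow_le_rpow (le_biSup (fun Q => F Q ^ r) hQ) (by positivity)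
    _ = ⨆ Q ∈ S, (F Q) ^ r := by
        rw [← ENNReal.rpow_mul, one_div_mul_cancel hr.ne', ENNReal.rpow_one]

lemma factor_norm {d : ℕ} (p q pj qj : ℝ≥0∞) (hp0 : p ≠ 0) (hptop : p ≠ ∞)
    (hpj : 0 < pj) (hq0 : q ≠ 0)
    (hqj : 1 / qj = 1 / pj * (p / q))
    (vj : (Fin d → ℝ) → ℝ) (hvj : ∀ᵐ x ∂(volume : Measure (Fin d → ℝ)), 0 < vj x)
    (G : (Fin d → ℝ) → ℝ) (hGnn : ∀ x, 0 ≤ G x) :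
    morreyNorm pj qj vj (fun x => G x ^ (p / pj).toReal / vj x)
      = (⨆ Q ∈ cubes d, volume Q ^ (1 / q).toReal *
          (volume Q ^ (-(1 / p).toReal) * eLpNorm (Q.indicator G) p volume))
        ^ (p / pj).toReal := by
  set r : ℝ := (p / pj).toReal with hr_def
  have hrfin : p / pj ≠ ∞ := (div_lt_top hptop hpj.ne').ne
  have hr0 : 0 ≤ r := ENNReal.toReal_nonneg
  -- exponent identities
  have e1 : (1 / qj).toReal = r * (1 / q).toReal := by
    have : 1 / qj = (p / pj) * (1 / q) := by
      rw [hqj]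
      simp only [div_eq_mul_inv, one_mul]
      ring
    rw [this, ENNReal.toReal_mul]
  have e2 : (1 / pj).toReal = r * (1 / p).toReal := by
    have : (p / pj) * (1 / p) = 1 / pj := by
      simp only [div_eq_mul_inv, one_mul]
      rw [mul_right_comm, ENNReal.mul_inv_cancel hp0 hptop, one_mul]
    rw [← this, ENNReal.toReal_mul]
  rw [← biSup_rpow (cubes_nonempty d) _ hr0]
  simp only [morreyNorm, avg]
  refine iSup_congr fun Q => iSup_congr fun hQ => ?_
  obtain ⟨hQm, hQ0, hQtop⟩ := cube_meas hQ
  by_cases hpjtop : pj = ∞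
  · -- r = 0
    have hr : r = 0 := by simp [hr_def, hpjtop, ENNReal.div_top]
    have hint : (fun x => G x ^ r / vj x * vj x) =ᵐ[volume] fun _ => (1 : ℝ) := by
      filter_upwards [hvj] with x hx
      rw [hr, Real.rpow_zero, one_div, inv_mul_cancel₀ hx.ne']
    have : eLpNorm (Q.indicator fun x => G x ^ r / vj x * vj x) pj volume = 1 := by
      rw [eLpNorm_congr_ae hint.indicator, hpjtop, eLpNorm_exponent_top,
        eLpNormEssSup_indicator_const_eq Q (1 : ℝ) hQ0]
      simp
    rw [this, hr, ENNReal.rpow_zero, e1, hr, zero_mul, ENNReal.rpow_zero, one_mul, e2, hr,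
      zero_mul, neg_zero, ENNReal.rpow_zero, one_mul]
  · -- r > 0
    have hrpos : 0 < r := ENNReal.toReal_pos
      (by simp [ENNReal.div_eq_zero_iff, hp0, hpjtop]) hrfin
    have hint : (fun x => G x ^ r / vj x * vj x) =ᵐ[volume] fun x => G x ^ r := by
      filter_upwards [hvj] with x hx
      rw [div_mul_cancel₀ _ hx.ne']
    have step1 : eLpNorm (Q.indicator fun x => G x ^ r / vj x * vj x) pj volume
        = eLpNorm (Q.indicator G) p volume ^ r := by
      rw [eLpNorm_congr_ae hint.indicator]
      have h2 : Q.indicator (fun x => G x ^ r)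
          = fun x => ‖Q.indicator G x‖ ^ r := by
        funext x
        by_cases hx : x ∈ Q
        · simp [Set.indicator_of_mem hx, Real.norm_eq_abs, abs_of_nonneg (hGnn x)]
        · simp [Set.indicator_of_notMem hx, Real.zero_rpow hrpos.ne']
      rw [h2, eLpNorm_norm_rpow _ hrpos, ENNReal.ofReal_toReal hrfin,
        ENNReal.mul_div_cancel hpj.ne' hpjtop]
    rw [step1, e1, e2]
    rw [show r * (1 / q).toReal = (1 / q).toReal * r by ring,
      show -(r * (1 / p).toReal) = -(1 / p).toReal * r by ring,
      ENNReal.rpow_mul, ENNReal.rpow_mul,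
      ENNReal.mul_rpow_of_nonneg _ _ hr0, ENNReal.mul_rpow_of_nonneg _ _ hr0]


/-- For `p₁, p₂ ∈ (0,∞]` with `1/p = 1/p₁ + 1/p₂ > 0`, `q ∈ [p,∞)`,
`1/q_j = (1/p_j)(p/q)` and weights `v₁, v₂` on `ℝ^d`, the weighted Morrey spaces
factorize: `𝓛^{p₁,q₁}_{v₁} · 𝓛^{p₂,q₂}_{v₂} = 𝓛^{p,q}_{v₁v₂}` with equal
(quasi-)norms, the product quasi-norm being the infimum of
`‖f₁‖·‖f₂‖` over all factorizations `|h| ≤ f₁ f₂` with `f_j ≥ 0`. -/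
theorem statement18 {d : ℕ} (p₁ p₂ p q q₁ q₂ : ℝ≥0∞)
    (hp₁ : 0 < p₁) (hp₂ : 0 < p₂) (hp : 1 / p = 1 / p₁ + 1 / p₂) (hppos : 0 < 1 / p)
    (hq : p ≤ q) (hqfin : q ≠ ∞)
    (hq₁ : 1 / q₁ = 1 / p₁ * (p / q)) (hq₂ : 1 / q₂ = 1 / p₂ * (p / q))
    (v₁ v₂ : (Fin d → ℝ) → ℝ)
    (hv₁m : Measurable v₁) (hv₂m : Measurable v₂)
    (hv₁ : ∀ᵐ x ∂volume, 0 < v₁ x) (hv₂ : ∀ᵐ x ∂volume, 0 < v₂ x)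
    (h : (Fin d → ℝ) → ℝ) (hmeas : AEStronglyMeasurable h volume) :
    sInf {c : ℝ≥0∞ | ∃ f₁ f₂ : (Fin d → ℝ) → ℝ,
        AEStronglyMeasurable f₁ volume ∧ AEStronglyMeasurable f₂ volume ∧
        (∀ᵐ x ∂volume, 0 ≤ f₁ x) ∧ (∀ᵐ x ∂volume, 0 ≤ f₂ x) ∧
        (∀ᵐ x ∂volume, |h x| ≤ f₁ x * f₂ x) ∧
        c = morreyNorm p₁ q₁ v₁ f₁ * morreyNorm p₂ q₂ v₂ f₂} =
      morreyNorm p q (fun x => v₁ x * v₂ x) h := by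
  -- basic exponent facts
  have hptop : p ≠ ∞ := by
    intro hh; rw [hh] at hppos; simp at hppos
  have h1p₁ : 1 / p₁ ≠ ∞ := by simp [hp₁.ne']
  have h1p₂ : 1 / p₂ ≠ ∞ := by simp [hp₂.ne']
  have hp0 : p ≠ 0 := by
    intro hh
    apply ENNReal.add_ne_top.2 ⟨h1p₁, h1p₂⟩
    rw [← hp, hh]
    simp
  have hq0 : q ≠ 0 := fun hh => hp0 (le_antisymm (hh ▸ hq) zero_le)
  have hr₁fin : p / p₁ ≠ ∞ := (ENNReal.div_lt_top hptop hp₁.ne').ne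
  have hr₂fin : p / p₂ ≠ ∞ := (ENNReal.div_lt_top hptop hp₂.ne').ne
  have hsumE : p / p₁ + p / p₂ = 1 := by
    rw [div_eq_mul_inv, div_eq_mul_inv, ← mul_add]
    have hp' : p₁⁻¹ + p₂⁻¹ = p⁻¹ := by
      have := hp.symm
      simpa [one_div] using this
    rw [hp', ENNReal.mul_inv_cancel hp0 hptop]
  have hsum : (p / p₁).toReal + (p / p₂).toReal = 1 := by
    rw [← ENNReal.toReal_add hr₁fin hr₂fin, hsumE, ENNReal.toReal_one]
  have hr₁0 : (0:ℝ) ≤ (p / p₁).toReal := ENNReal.toReal_nonneg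
  have hr₂0 : (0:ℝ) ≤ (p / p₂).toReal := ENNReal.toReal_nonneg
  -- the factorizing functions
  set G : (Fin d → ℝ) → ℝ := fun x => |h x * (v₁ x * v₂ x)| with hG_def
  have hGnn : ∀ x, 0 ≤ G x := fun x => abs_nonneg _
  have hGsm : AEStronglyMeasurable G volume := by
    have : G = fun x => ‖h x * (v₁ x * v₂ x)‖ := by
      funext x; rw [Real.norm_eq_abs]
    rw [this]
    exact (hmeas.mul ((hv₁m.mul hv₂m).aestronglyMeasurable)).norm
  -- bridge : eLpNorm of indicator of G equals that of h * v
  have hbridge : ∀ (Q : Set (Fin d → ℝ)) (p' : ℝ≥0∞),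
      eLpNorm (Q.indicator G) p' volume
        = eLpNorm (Q.indicator fun x => h x * (v₁ x * v₂ x)) p' volume := by
    intro Q p'
    have : Q.indicator G = fun x => ‖Q.indicator (fun x => h x * (v₁ x * v₂ x)) x‖ := by
      funext x
      by_cases hxQ : x ∈ Q
      · simp only [Set.indicator_of_mem hxQ, hG_def, Real.norm_eq_abs]
      · simp [Set.indicator_of_notMem hxQ]
    rw [this, eLpNorm_norm]
  have hWN : (⨆ Q ∈ cubes d, volume Q ^ (1 / q).toReal *
        (volume Q ^ (-(1 / p).toReal) * eLpNorm (Q.indicator G) p volume))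
      = morreyNorm p q (fun x => v₁ x * v₂ x) h := by
    simp only [morreyNorm, avg]
    exact iSup_congr fun Q => iSup_congr fun hQ => by rw [hbridge]
  -- Part A : the canonical factorization
  have keyA : morreyNorm p₁ q₁ v₁ (fun x => G x ^ (p / p₁).toReal / v₁ x) *
        morreyNorm p₂ q₂ v₂ (fun x => G x ^ (p / p₂).toReal / v₂ x)
      = morreyNorm p q (fun x => v₁ x * v₂ x) h := by
    rw [factor_norm p q p₁ q₁ hp0 hptop hp₁ hq0 hq₁ v₁ hv₁ G hGnn,
      factor_norm p q p₂ q₂ hp0 hptop hp₂ hq0 hq₂ v₂ hv₂ G hGnn, hWN,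
      ← ENNReal.rpow_add_of_nonneg _ _ hr₁0 hr₂0, hsum, ENNReal.rpow_one]
  refine le_antisymm ?_ ?_
  · -- sInf ≤ N via membership
    refine sInf_le ?_
    refine ⟨fun x => G x ^ (p / p₁).toReal / v₁ x, fun x => G x ^ (p / p₂).toReal / v₂ x,
      ?_, ?_, ?_, ?_, ?_, keyA.symm⟩
    · exact ((hGsm.aemeasurable.pow aemeasurable_const).div hv₁m.aemeasurable).aestronglyMeasurable
    · exact ((hGsm.aemeasurable.pow aemeasurable_const).div hv₂m.aemeasurable).aestronglyMeasurable
    · filter_upwards [hv₁] with x hx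
      exact div_nonneg (Real.rpow_nonneg (hGnn x) _) hx.le
    · filter_upwards [hv₂] with x hx
      exact div_nonneg (Real.rpow_nonneg (hGnn x) _) hx.le
    · filter_upwards [hv₁, hv₂] with x hx1 hx2
      have hvv : 0 < v₁ x * v₂ x := mul_pos hx1 hx2
      have : G x ^ (p / p₁).toReal / v₁ x * (G x ^ (p / p₂).toReal / v₂ x)
          = |h x| := by
        rw [div_mul_div_comm, ← Real.rpow_add_of_nonneg (hGnn x) hr₁0 hr₂0, hsum,
          Real.rpow_one]
        simp only [hG_def]
        rw [abs_mul, abs_of_pos hvv, mul_div_assoc, div_self hvv.ne', mul_one]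
      rw [this]
  · -- N is a lower bound
    refine le_sInf ?_
    rintro c ⟨f₁, f₂, hsm₁, hsm₂, h10, h20, hle, rfl⟩
    -- exponent sums
    have h1q₁ : 1 / q₁ ≠ ∞ := by
      rw [hq₁]; exact ENNReal.mul_ne_top h1p₁ (ENNReal.div_lt_top hptop hq0).ne
    have h1q₂ : 1 / q₂ ≠ ∞ := by
      rw [hq₂]; exact ENNReal.mul_ne_top h1p₂ (ENNReal.div_lt_top hptop hq0).ne
    have heq_q : 1 / q₁ + 1 / q₂ = 1 / q := by
      rw [hq₁, hq₂, ← add_mul, ← hp, div_eq_mul_inv p q, one_div, one_div,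
        ← mul_assoc, ENNReal.inv_mul_cancel hp0 hptop, one_mul]
    have eaq : (1 / q).toReal = (1 / q₁).toReal + (1 / q₂).toReal := by
      rw [← heq_q, ENNReal.toReal_add h1q₁ h1q₂]
    have eap : (1 / p).toReal = (1 / p₁).toReal + (1 / p₂).toReal := by
      rw [hp, ENNReal.toReal_add h1p₁ h1p₂]
    simp only [morreyNorm, avg]
    refine iSup₂_le fun Q hQ => ?_
    obtain ⟨hQm, hQ0, hQtop⟩ := cube_meas hQ
    have key : eLpNorm (Q.indicator fun x => h x * (v₁ x * v₂ x)) p volume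
        ≤ eLpNorm (Q.indicator fun x => f₁ x * v₁ x) p₁ volume *
          eLpNorm (Q.indicator fun x => f₂ x * v₂ x) p₂ volume := by
      have hmono : eLpNorm (Q.indicator fun x => h x * (v₁ x * v₂ x)) p volume
          ≤ eLpNorm (Q.indicator fun x => (f₁ x * v₁ x) * (f₂ x * v₂ x)) p volume := by
        refine eLpNorm_mono_ae ?_
        filter_upwards [hv₁, hv₂, h10, h20, hle] with x hx1 hx2 hxf1 hxf2 hxle
        by_cases hxQ : x ∈ Q
        · simp only [Set.indicator_of_mem hxQ, Real.norm_eq_abs]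
          rw [abs_mul, abs_of_pos (mul_pos hx1 hx2),
            abs_of_nonneg (mul_nonneg (mul_nonneg hxf1 hx1.le) (mul_nonneg hxf2 hx2.le))]
          calc |h x| * (v₁ x * v₂ x) ≤ (f₁ x * f₂ x) * (v₁ x * v₂ x) :=
                mul_le_mul_of_nonneg_right hxle (mul_pos hx1 hx2).le
            _ = f₁ x * v₁ x * (f₂ x * v₂ x) := by ring
        · simp [Set.indicator_of_notMem hxQ]
      refine hmono.trans ?_
      have hrw : Q.indicator (fun x => (f₁ x * v₁ x) * (f₂ x * v₂ x))
          = (Q.indicator fun x => f₁ x * v₁ x) • (Q.indicator fun x => f₂ x * v₂ x) := by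
        funext x
        by_cases hxQ : x ∈ Q <;>
          simp [Set.indicator_of_mem, Set.indicator_of_notMem, hxQ]
      rw [hrw]
      exact eLpNorm_smul_le_mul_eLpNorm
        ((hsm₂.mul hv₂m.aestronglyMeasurable).indicator hQm)
        ((hsm₁.mul hv₁m.aestronglyMeasurable).indicator hQm) (hpqr := ⟨by simpa only [one_div] using hp.symm⟩)
    calc volume Q ^ (1 / q).toReal * (volume Q ^ (-(1 / p).toReal) *
          eLpNorm (Q.indicator fun x => h x * (v₁ x * v₂ x)) p volume)
        ≤ volume Q ^ (1 / q).toReal * (volume Q ^ (-(1 / p).toReal) *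
            (eLpNorm (Q.indicator fun x => f₁ x * v₁ x) p₁ volume *
             eLpNorm (Q.indicator fun x => f₂ x * v₂ x) p₂ volume)) := by
          exact mul_le_mul_right (mul_le_mul_right key _) _
      _ = (volume Q ^ (1 / q₁).toReal * (volume Q ^ (-(1 / p₁).toReal) *
            eLpNorm (Q.indicator fun x => f₁ x * v₁ x) p₁ volume)) *
          (volume Q ^ (1 / q₂).toReal * (volume Q ^ (-(1 / p₂).toReal) *
            eLpNorm (Q.indicator fun x => f₂ x * v₂ x) p₂ volume)) := by
          rw [eaq, eap, neg_add, ENNReal.rpow_add _ _ hQ0 hQtop,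
            ENNReal.rpow_add _ _ hQ0 hQtop]
          ring
      _ ≤ _ := by
          refine mul_le_mul' ?_ ?_
          · exact le_biSup (fun Q => volume Q ^ (1 / q₁).toReal *
              (volume Q ^ (-(1 / p₁).toReal) *
                eLpNorm (Q.indicator fun x => f₁ x * v₁ x) p₁ volume)) hQ
          · exact le_biSup (fun Q => volume Q ^ (1 / q₂).toReal *
              (volume Q ^ (-(1 / p₂).toReal) *
                eLpNorm (Q.indicator fun x => f₂ x * v₂ x) p₂ volume)) hQ
end

section
/- Let X be a quasi-Banach function space over a σ-finite measure space Ω. Then the weak space wX, defined by ‖f‖_{wX} = sup_{λ>0} λ‖1_{{x : |f(x)|>λ}}‖_X, is again a quasi-Banach function space, and X ⊆ wX with ‖f‖_{wX} ≤ ‖f‖_X for all f ∈ X. Moreover, for any measurable set E, ‖1_E‖_{wX} = ‖1_E‖_X. -/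
open MeasureTheory ENNReal

/-- Membership in the weak space `wX`: `f ∈ L⁰` such that the distribution-set
indicators lie in `X` and `sup_{λ>0} λ‖1_{{|f|>λ}}‖_X < ∞`. -/
def wMem {Ω : Type*} [MeasurableSpace Ω] {μ : Measure Ω} (X : QBFS Ω μ)
    (f : Ω → ℝ) : Prop :=
  AEStronglyMeasurable f μ ∧
    (∀ l : ℝ, 0 < l → X.mem ({x | l < |f x|}.indicator fun _ => (1 : ℝ))) ∧
    BddAbove {c : ℝ | ∃ l : ℝ, 0 < l ∧
      c = l * X.norm ({x | l < |f x|}.indicator fun _ => (1 : ℝ))}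

/-- The weak quasi-norm `‖f‖_{wX} = sup_{λ>0} λ‖1_{{|f|>λ}}‖_X`. -/
noncomputable def wNorm {Ω : Type*} [MeasurableSpace Ω] {μ : Measure Ω} (X : QBFS Ω μ)
    (f : Ω → ℝ) : ℝ :=
  sSup {c : ℝ | ∃ l : ℝ, 0 < l ∧
    c = l * X.norm ({x | l < |f x|}.indicator fun _ => (1 : ℝ))}

namespace S19

open Filter Pointwise

variable {Ω : Type*} [MeasurableSpace Ω] {μ : Measure Ω} (X : QBFS Ω μ)

/-- The distribution indicator. -/
noncomputable def dInd (f : Ω → ℝ) (l : ℝ) : Ω → ℝ := ({x | l < |f x|}).indicator fun _ => (1 : ℝ)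

/-- The set of which the sup is taken in `wNorm`. -/
def wSet (f : Ω → ℝ) : Set ℝ :=
  {c : ℝ | ∃ l : ℝ, 0 < l ∧ c = l * X.norm (dInd f l)}

lemma wMem_def (f : Ω → ℝ) : wMem X f ↔
    (AEStronglyMeasurable f μ ∧ (∀ l : ℝ, 0 < l → X.mem (dInd f l)) ∧
      BddAbove (wSet X f)) := Iff.rfl

lemma wNorm_def (f : Ω → ℝ) : wNorm X f = sSup (wSet X f) := rfl

lemma wSet_nonempty (f : Ω → ℝ) : (wSet X f).Nonempty :=
  ⟨1 * X.norm (dInd f 1), 1, one_pos, rfl⟩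

lemma mem_wSet (f : Ω → ℝ) {l : ℝ} (hl : 0 < l) :
    l * X.norm (dInd f l) ∈ wSet X f := ⟨l, hl, rfl⟩

lemma dInd_apply' (f : Ω → ℝ) (l : ℝ) (x : Ω) :
    dInd f l x = if l < |f x| then 1 else 0 := by
  simp [dInd, Set.indicator_apply, Set.mem_setOf_eq]

lemma aesm_dInd {f : Ω → ℝ} (hf : AEStronglyMeasurable f μ) (l : ℝ) :
    AEStronglyMeasurable (dInd f l) μ := by
  obtain ⟨g, hg, hfg⟩ := hf
  refine ⟨dInd g l, ?_, ?_⟩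
  · have hs : MeasurableSet {x | l < |g x|} :=
      measurableSet_lt measurable_const hg.measurable.abs
    exact ((measurable_const.indicator hs)).stronglyMeasurable
  · filter_upwards [hfg] with x hx
    simp only [dInd, Set.indicator_apply, Set.mem_setOf_eq, hx]

/-- Inclusion `X ⊆ wX`, quantitative form. -/
lemma key {f : Ω → ℝ} (hf : X.mem f) {l : ℝ} (hl : 0 < l) :
    X.mem (dInd f l) ∧ l * X.norm (dInd f l) ≤ X.norm f := by
  have hfa := X.aestronglyMeasurable f hf
  have ha : AEStronglyMeasurable (l • dInd f l) μ := (aesm_dInd hfa l).const_smul l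
  have hle : ∀ᵐ x ∂μ, |(l • dInd f l) x| ≤ |f x| := by
    refine Filter.Eventually.of_forall fun x => ?_
    simp only [Pi.smul_apply, smul_eq_mul, dInd_apply']
    by_cases h : l < |f x|
    · rw [if_pos h]; rw [mul_one, abs_of_pos hl]; exact h.le
    · rw [if_neg h]; simp [abs_nonneg]
  obtain ⟨hm, hn⟩ := X.ideal f (l • dInd f l) hf ha hle
  have heq : dInd f l = l⁻¹ • (l • dInd f l) := by
    funext x
    simp only [Pi.smul_apply, smul_eq_mul]
    rw [← mul_assoc, inv_mul_cancel₀ hl.ne', one_mul]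
  have hmem : X.mem (dInd f l) := by rw [heq]; exact X.smul_mem _ _ hm
  refine ⟨hmem, ?_⟩
  have hs := X.norm_smul l (dInd f l) hmem
  rw [abs_of_pos hl] at hs
  rw [← hs]; exact hn

lemma inclusion {f : Ω → ℝ} (hf : X.mem f) : wMem X f ∧ wNorm X f ≤ X.norm f := by
  have hb : ∀ c ∈ wSet X f, c ≤ X.norm f := by
    rintro c ⟨l, hl, rfl⟩; exact (key X hf hl).2
  refine ⟨(wMem_def X f).2 ⟨X.aestronglyMeasurable f hf,
    fun l hl => (key X hf hl).1, ⟨X.norm f, hb⟩⟩, ?_⟩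
  exact csSup_le (wSet_nonempty X f) hb

lemma wnorm_nonneg {f : Ω → ℝ} (hf : wMem X f) : 0 ≤ wNorm X f := by
  have h2 : ∀ l : ℝ, 0 < l → X.mem (dInd f l) := hf.2.1
  have h3 : BddAbove (wSet X f) := hf.2.2
  have := le_csSup h3 (mem_wSet X f one_pos)
  have h0 : 0 ≤ 1 * X.norm (dInd f 1) := by
    rw [one_mul]; exact X.norm_nonneg _ (h2 1 one_pos)
  exact h0.trans this

lemma dInd_mono {f g : Ω → ℝ} (hle : ∀ᵐ x ∂μ, |g x| ≤ |f x|) (l : ℝ) :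
    ∀ᵐ x ∂μ, |dInd g l x| ≤ |dInd f l x| := by
  filter_upwards [hle] with x hx
  by_cases h : l < |g x|
  · rw [dInd_apply', dInd_apply', if_pos h, if_pos (lt_of_lt_of_le h hx)]
  · rw [dInd_apply', if_neg h, abs_zero]; exact abs_nonneg _

lemma w_ideal {f g : Ω → ℝ} (hf : wMem X f) (hg : AEStronglyMeasurable g μ)
    (hle : ∀ᵐ x ∂μ, |g x| ≤ |f x|) : wMem X g ∧ wNorm X g ≤ wNorm X f := by
  have hf2 : ∀ l : ℝ, 0 < l → X.mem (dInd f l) := hf.2.1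
  have hf3 : BddAbove (wSet X f) := hf.2.2
  have hmem : ∀ l : ℝ, 0 < l →
      X.mem (dInd g l) ∧ X.norm (dInd g l) ≤ X.norm (dInd f l) := fun l hl =>
    X.ideal _ _ (hf2 l hl) (aesm_dInd hg l) (dInd_mono hle l)
  have hb : ∀ c ∈ wSet X g, c ≤ wNorm X f := by
    rintro c ⟨l, hl, rfl⟩
    calc l * X.norm (dInd g l) ≤ l * X.norm (dInd f l) :=
          mul_le_mul_of_nonneg_left (hmem l hl).2 hl.le
      _ ≤ wNorm X f := le_csSup hf3 (mem_wSet X f hl)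
  refine ⟨(wMem_def X g).2 ⟨hg, fun l hl => (hmem l hl).1, ⟨_, hb⟩⟩, ?_⟩
  rw [wNorm_def]
  exact csSup_le (wSet_nonempty X g) hb

lemma mem_zero {f : Ω → ℝ} (hf : wMem X f) :
    X.mem (fun _ => (0 : ℝ)) ∧ X.norm (fun _ => (0 : ℝ)) = 0 := by
  have h1 : X.mem (dInd f 1) := hf.2.1 1 one_pos
  have heq : (fun _ : Ω => (0 : ℝ)) = (0 : ℝ) • dInd f 1 := by
    funext x; simp
  constructor
  · rw [heq]; exact X.smul_mem 0 (dInd f 1) h1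
  · rw [heq, X.norm_smul 0 (dInd f 1) h1]; simp

lemma w_smul (c : ℝ) (f : Ω → ℝ) (hf : wMem X f) :
    wMem X (c • f) ∧ wNorm X (c • f) = |c| * wNorm X f := by
  obtain ⟨hz, hz0⟩ := mem_zero X hf
  have hf1 : AEStronglyMeasurable f μ := hf.1
  have hf2 : ∀ l : ℝ, 0 < l → X.mem (dInd f l) := hf.2.1
  have hf3 : BddAbove (wSet X f) := hf.2.2
  by_cases hc : c = 0
  · subst hc
    have hd : ∀ l : ℝ, 0 < l → dInd ((0 : ℝ) • f) l = fun _ => (0 : ℝ) := by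
      intro l hl; funext x
      rw [dInd_apply', if_neg]
      simp only [Pi.smul_apply, smul_eq_mul, zero_mul, abs_zero]
      exact not_lt.2 hl.le
    have hbA : ∀ c' ∈ wSet X ((0 : ℝ) • f), c' ≤ 0 := by
      rintro c' ⟨l, hl, rfl⟩
      rw [hd l hl, hz0, mul_zero]
    have hw : wMem X ((0 : ℝ) • f) := (wMem_def X _).2
      ⟨hf1.const_smul 0, fun l hl => by rw [hd l hl]; exact hz, ⟨0, hbA⟩⟩
    refine ⟨hw, ?_⟩
    rw [abs_zero, zero_mul, wNorm_def]
    exact le_antisymm (csSup_le (wSet_nonempty X _) hbA) (by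
      rw [← wNorm_def]; exact wnorm_nonneg X hw)
  · have hcpos : 0 < |c| := abs_pos.2 hc
    have hdeq : ∀ l : ℝ, dInd (c • f) l = dInd f (l / |c|) := by
      intro l; funext x
      rw [dInd_apply', dInd_apply']
      congr 1
      simp only [Pi.smul_apply, smul_eq_mul, abs_mul]
      rw [eq_iff_iff, div_lt_iff₀ hcpos, mul_comm]
    have hseteq : wSet X (c • f) = |c| • wSet X f := by
      ext c'
      constructor
      · rintro ⟨l, hl, rfl⟩
        refine Set.mem_smul_set.2 ⟨(l / |c|) * X.norm (dInd f (l / |c|)),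
          ⟨l / |c|, div_pos hl hcpos, rfl⟩, ?_⟩
        have hcl : |c| * (l / |c|) = l := by field_simp
        rw [smul_eq_mul, hdeq l, ← mul_assoc, hcl]
      · intro hc'
        rw [Set.mem_smul_set] at hc'
        obtain ⟨b, ⟨l, hl, rfl⟩, rfl⟩ := hc'
        refine ⟨|c| * l, mul_pos hcpos hl, ?_⟩
        rw [smul_eq_mul, hdeq (|c| * l), mul_div_cancel_left₀ _ hcpos.ne',
          mul_assoc]
    have hw : wMem X (c • f) := by
      refine (wMem_def X _).2 ⟨hf1.const_smul c, fun l hl => ?_, ?_⟩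
      · rw [hdeq l]; exact hf2 _ (div_pos hl hcpos)
      · obtain ⟨B, hB⟩ := hf3
        refine ⟨|c| * B, ?_⟩
        rw [show wSet X (c • f) = |c| • wSet X f from hseteq]
        rintro _ ⟨b, hb, rfl⟩
        exact mul_le_mul_of_nonneg_left (hB hb) (abs_nonneg c)
    refine ⟨hw, ?_⟩
    rw [wNorm_def, wNorm_def, hseteq, Real.sSup_smul_of_nonneg (abs_nonneg c),
      smul_eq_mul]

lemma dInd_add_le (f g : Ω → ℝ) {l : ℝ} (hl : 0 < l) :
    ∀ᵐ x ∂μ, |dInd (f + g) l x| ≤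
      |(dInd f (l / 2) + dInd g (l / 2)) x| := by
  refine Filter.Eventually.of_forall fun x => ?_
  simp only [Pi.add_apply]
  by_cases h : l < |(f + g) x|
  · have hor : l / 2 < |f x| ∨ l / 2 < |g x| := by
      by_contra hcon
      push_neg at hcon
      have : |(f + g) x| ≤ l := by
        simp only [Pi.add_apply]
        calc |f x + g x| ≤ |f x| + |g x| := abs_add_le _ _
          _ ≤ l / 2 + l / 2 := add_le_add hcon.1 hcon.2
          _ = l := by ring
      exact absurd h (not_lt.2 this)
    rw [dInd_apply', if_pos h, dInd_apply', dInd_apply']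
    rcases hor with hor | hor
    · rw [if_pos hor]
      have : (0:ℝ) ≤ if l / 2 < |g x| then 1 else 0 := by positivity
      rw [abs_one, abs_of_nonneg (by linarith)]
      linarith
    · rw [if_pos hor]
      have : (0:ℝ) ≤ if l / 2 < |f x| then 1 else 0 := by positivity
      rw [abs_one, abs_of_nonneg (by linarith)]
      linarith
  · rw [dInd_apply', if_neg h, abs_zero]
    exact abs_nonneg _

lemma w_add (f g : Ω → ℝ) (hf : wMem X f) (hg : wMem X g) :
    wMem X (f + g) ∧
      wNorm X (f + g) ≤ 2 * X.K * (wNorm X f + wNorm X g) := by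
  have hf1 : AEStronglyMeasurable f μ := hf.1
  have hf2 : ∀ l : ℝ, 0 < l → X.mem (dInd f l) := hf.2.1
  have hf3 : BddAbove (wSet X f) := hf.2.2
  have hg1 : AEStronglyMeasurable g μ := hg.1
  have hg2 : ∀ l : ℝ, 0 < l → X.mem (dInd g l) := hg.2.1
  have hg3 : BddAbove (wSet X g) := hg.2.2
  have hK : (0:ℝ) ≤ X.K := le_trans zero_le_one X.one_le_K
  have hmem : ∀ l : ℝ, 0 < l → X.mem (dInd (f + g) l) ∧
      l * X.norm (dInd (f + g) l) ≤ 2 * X.K * (wNorm X f + wNorm X g) := by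
    intro l hl
    have hl2 : 0 < l / 2 := by linarith
    have hmf := hf2 (l / 2) hl2
    have hmg := hg2 (l / 2) hl2
    have hsum : X.mem (dInd f (l / 2) + dInd g (l / 2)) := X.add_mem _ _ hmf hmg
    obtain ⟨hm, hn⟩ := X.ideal _ _ hsum (aesm_dInd (hf1.add hg1) l)
      (dInd_add_le f g hl)
    refine ⟨hm, ?_⟩
    have htri := X.quasi_triangle _ _ hmf hmg
    have h1 : l / 2 * X.norm (dInd f (l / 2)) ≤ wNorm X f :=
      le_csSup hf3 (mem_wSet X f hl2)
    have h2 : l / 2 * X.norm (dInd g (l / 2)) ≤ wNorm X g :=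
      le_csSup hg3 (mem_wSet X g hl2)
    calc l * X.norm (dInd (f + g) l)
        ≤ l * (X.K * (X.norm (dInd f (l / 2)) + X.norm (dInd g (l / 2)))) := by
          apply mul_le_mul_of_nonneg_left _ hl.le
          exact le_trans hn htri
      _ = 2 * X.K * (l / 2 * X.norm (dInd f (l / 2))
            + l / 2 * X.norm (dInd g (l / 2))) := by ring
      _ ≤ 2 * X.K * (wNorm X f + wNorm X g) := by
          apply mul_le_mul_of_nonneg_left _ (by linarith)
          exact add_le_add h1 h2
  have hb : ∀ c ∈ wSet X (f + g), c ≤ 2 * X.K * (wNorm X f + wNorm X g) := by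
    rintro c ⟨l, hl, rfl⟩; exact (hmem l hl).2
  refine ⟨(wMem_def X _).2 ⟨hf1.add hg1, fun l hl => (hmem l hl).1, ⟨_, hb⟩⟩, ?_⟩
  rw [wNorm_def]
  exact csSup_le (wSet_nonempty X _) hb

lemma w_norm_eq_zero {f : Ω → ℝ} (hf : wMem X f) :
    wNorm X f = 0 ↔ f =ᵐ[μ] 0 := by
  have hf2 : ∀ l : ℝ, 0 < l → X.mem (dInd f l) := hf.2.1
  have hf3 : BddAbove (wSet X f) := hf.2.2
  constructor
  · intro h
    have hzero : ∀ l : ℝ, 0 < l → dInd f l =ᵐ[μ] 0 := by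
      intro l hl
      have hle : l * X.norm (dInd f l) ≤ 0 := by
        rw [← h, wNorm_def]; exact le_csSup hf3 (mem_wSet X f hl)
      have hge : 0 ≤ X.norm (dInd f l) := X.norm_nonneg _ (hf2 l hl)
      have hnz : X.norm (dInd f l) = 0 := by nlinarith
      exact (X.norm_eq_zero_iff (dInd f l) (hf2 l hl)).1 hnz
    have hae : ∀ᵐ x ∂μ, ∀ n : ℕ, |f x| ≤ 1 / (n + 1) := by
      rw [ae_all_iff]
      intro n
      have hpos : (0:ℝ) < 1 / ((n:ℝ) + 1) := by positivity
      filter_upwards [hzero _ hpos] with x hx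
      by_contra hcon
      push_neg at hcon
      rw [dInd_apply', if_pos hcon] at hx
      simpa using hx
    filter_upwards [hae] with x hx
    have htend : Tendsto (fun n : ℕ => 1 / ((n:ℝ) + 1)) atTop (nhds 0) :=
      tendsto_one_div_add_atTop_nhds_zero_nat
    have hle0 : |f x| ≤ 0 := ge_of_tendsto' htend hx
    simpa using abs_nonpos_iff.1 hle0
  · intro h
    have hzero : ∀ l : ℝ, 0 < l → X.norm (dInd f l) = 0 := by
      intro l hl
      refine (X.norm_eq_zero_iff (dInd f l) (hf2 l hl)).2 ?_
      filter_upwards [h] with x hx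
      have hnl : ¬ l < |f x| := by
        rw [hx, Pi.zero_apply, abs_zero]; exact not_lt.2 hl.le
      rw [dInd_apply', if_neg hnl, Pi.zero_apply]
    rw [wNorm_def]
    refine le_antisymm (csSup_le (wSet_nonempty X f) ?_) ?_
    · rintro c ⟨l, hl, rfl⟩
      rw [hzero l hl, mul_zero]
    · rw [← wNorm_def]; exact wnorm_nonneg X hf

lemma w_fatou (f : ℕ → Ω → ℝ) (g : Ω → ℝ) (hmem : ∀ n, wMem X (f n))
    (hmono : ∀ᵐ x ∂μ, ∀ n, 0 ≤ f n x ∧ f n x ≤ f (n + 1) x)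
    (htend : ∀ᵐ x ∂μ, Tendsto (fun n => f n x) atTop (nhds (g x)))
    (hg : AEStronglyMeasurable g μ)
    (hbdd : BddAbove (Set.range fun n => wNorm X (f n))) :
    wMem X g ∧ wNorm X g = ⨆ n, wNorm X (f n) := by
  set M : ℝ := ⨆ n, wNorm X (f n) with hM
  have hfM : ∀ n, wNorm X (f n) ≤ M := fun n => le_ciSup hbdd n
  -- a.e. pointwise facts
  have H : ∀ᵐ x ∂μ, (∀ n, 0 ≤ f n x ∧ f n x ≤ f (n + 1) x) ∧
      Tendsto (fun n => f n x) atTop (nhds (g x)) := hmono.and htend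
  -- per-level fatou
  have hlevel : ∀ l : ℝ, 0 < l →
      X.mem (dInd g l) ∧ l * X.norm (dInd g l) ≤ M := by
    intro l hl
    have hA : ∀ᵐ x ∂μ, ∀ n, 0 ≤ dInd (f n) l x ∧
        dInd (f n) l x ≤ dInd (f (n + 1)) l x := by
      filter_upwards [H] with x hx
      intro n
      have hfn : |f n x| ≤ |f (n + 1) x| := by
        rw [abs_of_nonneg (hx.1 n).1, abs_of_nonneg (hx.1 (n + 1)).1]
        exact (hx.1 n).2
      rw [dInd_apply', dInd_apply']
      constructor
      · split_ifs <;> norm_num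
      · by_cases h1 : l < |f n x|
        · rw [if_pos h1, if_pos (lt_of_lt_of_le h1 hfn)]
        · rw [if_neg h1]
          split_ifs <;> norm_num
    have hB : ∀ᵐ x ∂μ, Tendsto (fun n => dInd (f n) l x) atTop
        (nhds (dInd g l x)) := by
      filter_upwards [H] with x hx
      have hmonx : Monotone fun n => f n x :=
        monotone_nat_of_le_succ fun n => (hx.1 n).2
      have hleg : ∀ n, f n x ≤ g x := fun n => hmonx.ge_of_tendsto hx.2 n
      by_cases hgl : l < |g x|
      · have hgl' : l < g x := by
          rwa [abs_of_nonneg (le_trans (hx.1 0).1 (hleg 0))] at hgl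
        have hev : ∀ᶠ n in atTop, l < f n x := hx.2.eventually_const_lt hgl'
        have heq : (fun _ : ℕ => (1:ℝ)) =ᶠ[atTop] fun n => dInd (f n) l x := by
          filter_upwards [hev] with n hn
          rw [dInd_apply', if_pos (by rwa [abs_of_nonneg (hx.1 n).1])]
        rw [dInd_apply', if_pos hgl]
        exact Tendsto.congr' heq tendsto_const_nhds
      · have hfnl : ∀ n, dInd (f n) l x = 0 := by
          intro n
          rw [dInd_apply', if_neg]
          intro hcon
          exact hgl (lt_of_lt_of_le hcon (by
            rw [abs_of_nonneg (hx.1 n).1]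
            exact (hleg n).trans (le_abs_self _)))
        rw [dInd_apply', if_neg hgl]
        exact Tendsto.congr (fun n => (hfnl n).symm) tendsto_const_nhds
    have hC : BddAbove (Set.range fun n => X.norm (dInd (f n) l)) := by
      refine ⟨M / l, ?_⟩
      rintro _ ⟨n, rfl⟩
      rw [le_div_iff₀ hl, mul_comm]
      exact le_trans (le_csSup (hmem n).2.2 (mem_wSet X (f n) hl)) (hfM n)
    obtain ⟨hmg, hng⟩ := X.fatou (fun n => dInd (f n) l) (dInd g l)
      (fun n => (hmem n).2.1 l hl) hA hB (aesm_dInd hg l) hC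
    refine ⟨hmg, ?_⟩
    rw [hng, Real.mul_iSup_of_nonneg hl.le]
    refine ciSup_le fun n => ?_
    exact le_trans (le_csSup (hmem n).2.2 (mem_wSet X (f n) hl)) (hfM n)
  have hb : ∀ c ∈ wSet X g, c ≤ M := by
    rintro c ⟨l, hl, rfl⟩; exact (hlevel l hl).2
  have hwg : wMem X g := (wMem_def X g).2 ⟨hg, fun l hl => (hlevel l hl).1, ⟨M, hb⟩⟩
  rw [wNorm_def]
  refine ⟨hwg, le_antisymm (csSup_le (wSet_nonempty X g) hb) ?_⟩
  refine ciSup_le fun n => ?_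
  refine (w_ideal X hwg (hmem n).1 ?_).2
  filter_upwards [H] with x hx
  rw [abs_of_nonneg (hx.1 n).1]
  have hmonx : Monotone fun n => f n x :=
    monotone_nat_of_le_succ fun n => (hx.1 n).2
  exact (hmonx.ge_of_tendsto hx.2 n).trans (le_abs_self _)

end S19

open S19 Filter in
/-- For a quasi-Banach function space `X`, the weak space `wX` is
again a quasi-Banach function space, `X ⊆ wX` with `‖f‖_{wX} ≤ ‖f‖_X`, and for any
measurable set `E` (whose indicator lies in `X`) one has `‖1_E‖_{wX} = ‖1_E‖_X`. -/
theorem statement19 {Ω : Type*} [MeasurableSpace Ω] {μ : Measure Ω} [SigmaFinite μ]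
    (X : QBFS Ω μ) :
    (∃ Y : QBFS Ω μ, Y.mem = wMem X ∧ Y.norm = wNorm X) ∧
    (∀ f, X.mem f → wMem X f ∧ wNorm X f ≤ X.norm f) ∧
    (∀ E : Set Ω, MeasurableSet E → X.mem (E.indicator fun _ => (1 : ℝ)) →
      wNorm X (E.indicator fun _ => (1 : ℝ)) = X.norm (E.indicator fun _ => (1 : ℝ))) := by
  refine ⟨?_, fun f hf => inclusion X hf, ?_⟩
  · refine ⟨{
      mem := wMem X
      norm := wNorm X
      K := 2 * X.K
      one_le_K := by have := X.one_le_K; linarith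
      norm_nonneg := fun f hf => wnorm_nonneg X hf
      aestronglyMeasurable := fun f hf => hf.1
      add_mem := fun f g hf hg => (w_add X f g hf hg).1
      quasi_triangle := fun f g hf hg => (w_add X f g hf hg).2
      smul_mem := fun c f hf => (w_smul X c f hf).1
      norm_smul := fun c f hf => (w_smul X c f hf).2
      norm_eq_zero_iff := fun f hf => w_norm_eq_zero X hf
      ideal := fun f g hf hg hle => w_ideal X hf hg hle
      fatou := fun f g hmem hmono htend hg hbdd =>
        w_fatou X f g hmem hmono htend hg hbdd
      saturation := by
        intro E hE hEpos
        obtain ⟨F, hFE, hFm, hFpos, hFmem⟩ := X.saturation E hE hEpos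
        exact ⟨F, hFE, hFm, hFpos, (inclusion X hFmem).1⟩ }, rfl, rfl⟩
  · intro E hE hmem
    set ind : Ω → ℝ := E.indicator fun _ => (1 : ℝ) with hind
    have hw := (inclusion X hmem).1
    have hw3 : BddAbove (wSet X ind) := hw.2.2
    set N : ℝ := X.norm ind with hN
    have hN0 : 0 ≤ N := X.norm_nonneg _ hmem
    have habs : ∀ x, |ind x| = ind x := by
      intro x
      by_cases hx : x ∈ E <;> simp [hind, Set.indicator_apply, hx]
    have hdlt : ∀ l : ℝ, 0 < l → l < 1 → dInd ind l = ind := by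
      intro l hl0 hl1
      have hset : {x | l < |ind x|} = E := by
        ext x
        simp only [Set.mem_setOf_eq, habs]
        by_cases hx : x ∈ E
        · simp [hind, Set.indicator_apply, hx, hl1]
        · simp [hind, Set.indicator_apply, hx, not_lt.2 hl0.le]
      unfold dInd
      rw [hset, hind]
    have hdge : ∀ l : ℝ, 1 ≤ l → dInd ind l = fun _ => (0:ℝ) := by
      intro l hl
      funext x
      have hnl : ¬ l < |ind x| := by
        rw [habs]
        refine not_lt.2 ?_
        by_cases hx : x ∈ E
        · simp [hind, Set.indicator_apply, hx, hl]
        · rw [hind, Set.indicator_of_notMem hx]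
          linarith
      rw [dInd_apply', if_neg hnl]
    have hz0 : X.norm (fun _ => (0:ℝ)) = 0 := (mem_zero X hw).2
    -- upper bound
    have hb : ∀ c ∈ wSet X ind, c ≤ N := by
      rintro c ⟨l, hl, rfl⟩
      by_cases hl1 : l < 1
      · rw [hdlt l hl hl1, ← hN]
        calc l * N ≤ 1 * N := mul_le_mul_of_nonneg_right hl1.le hN0
          _ = N := one_mul N
      · rw [hdge l (not_lt.1 hl1), hz0, mul_zero]; exact hN0
    -- lower bound via sequence
    have hseq : ∀ n : ℕ, (1 - 1 / ((n:ℝ) + 2)) * N ∈ wSet X ind := by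
      intro n
      have h2 : (0:ℝ) < (n:ℝ) + 2 := by positivity
      have hpos : 0 < 1 - 1 / ((n:ℝ) + 2) := by
        rw [sub_pos, div_lt_one h2]; linarith
      have hlt1 : 1 - 1 / ((n:ℝ) + 2) < 1 := by
        have hq : 0 < 1 / ((n:ℝ) + 2) := by positivity
        linarith
      refine ⟨1 - 1 / ((n:ℝ) + 2), hpos, ?_⟩
      rw [hdlt _ hpos hlt1, ← hN]
    have htends : Tendsto (fun n : ℕ => (1 - 1 / ((n:ℝ) + 2)) * N) atTop
        (nhds ((1 - 0) * N)) := by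
      refine Tendsto.mul_const N (Tendsto.const_sub 1 ?_)
      have h1 : Tendsto (fun n : ℕ => ((n:ℝ) + 2)) atTop atTop :=
        tendsto_atTop_add_const_right _ 2 tendsto_natCast_atTop_atTop
      have h3 : Tendsto (fun n : ℕ => ((n:ℝ) + 2)⁻¹) atTop (nhds 0) := h1.inv_tendsto_atTop
      simpa [one_div] using h3
    have hge : N ≤ wNorm X ind := by
      have hlim : Tendsto (fun n : ℕ => (1 - 1 / ((n:ℝ) + 2)) * N) atTop
          (nhds N) := by
        rw [show (N : ℝ) = (1 - 0) * N by ring]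
        convert htends using 2 <;> ring
      exact le_of_tendsto' hlim fun n => le_csSup hw3 (hseq n)
    rw [wNorm_def]
    exact le_antisymm (csSup_le (wSet_nonempty X ind) hb) hge
end
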